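/- arXiv:0812.0895 — 4 statements merged into one kernel-verified Lean document; each statement's English description precedes it below -/
import Mathlib

section
/- Let λ ∈ ℝ, η > 0, and let z ∈ ℝ satisfy |z|·(|λ| + 2√η) < 1. Then ∫_ℝ 1/(1 − s z) dμ_{λ,η}(s) = 2 / (1 − λz + √((1 − λz)² − 4 z² η)), where the square root is the real square root (and (1 − λz)² − 4z²η > 0 under the stated hypothesis). -/
open MeasureTheory Real intervalIntegral
open scoped NNReal ENNReal

/-- The semicircle law with mean `l` and variance `e`: the measure on `ℝ` with density
`s ↦ (2πe)⁻¹ √(max (4e − (s−l)², 0))` with respect to Lebesgue measure. -/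
noncomputable def semicircleLaw (l e : ℝ) : Measure ℝ :=
  volume.withDensity fun s =>
    ENNReal.ofReal ((2 * Real.pi * e)⁻¹ * Real.sqrt (max (4 * e - (s - l) ^ 2) 0))

lemma key_semicircle_integral (a b : ℝ) (hab : |b| < a) :
    ∫ t in (-1:ℝ)..1, Real.sqrt (1 - t ^ 2) / (a - b * t)
      = Real.pi / (a + Real.sqrt (a ^ 2 - b ^ 2)) := by
  have ha : 0 < a := (abs_nonneg b).trans_lt hab
  have hb' := abs_lt.mp hab
  have hab2 : 0 < a ^ 2 - b ^ 2 := by nlinarith [hb'.1, hb'.2]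
  have hR : 0 < Real.sqrt (a ^ 2 - b ^ 2) := Real.sqrt_pos.mpr hab2
  have hR2 : Real.sqrt (a ^ 2 - b ^ 2) ^ 2 = a ^ 2 - b ^ 2 := Real.sq_sqrt hab2.le
  have hden : ∀ t : ℝ, -1 ≤ t → t ≤ 1 → 0 < a - b * t := by
    intro t h1 h2
    have h3 : b * t ≤ |b| * |t| := by
      calc b * t ≤ |b * t| := le_abs_self _
        _ = |b| * |t| := abs_mul _ _
    have ht : |t| ≤ 1 := abs_le.mpr ⟨h1, h2⟩
    nlinarith [abs_nonneg b]
  rcases eq_or_ne b 0 with rfl | hb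
  · simp only [zero_mul, sub_zero]
    rw [show (a:ℝ)^2 - 0^2 = a^2 by ring, Real.sqrt_sq ha.le]
    rw [intervalIntegral.integral_div, integral_sqrt_one_sub_sq, div_div,
      show a + a = 2 * a by ring]
  · set R := Real.sqrt (a ^ 2 - b ^ 2) with hRdef
    set G : ℝ → ℝ := fun t => b⁻¹ * b⁻¹ *
      (a * Real.arcsin t - b * Real.sqrt (1 - t ^ 2)
        - R * Real.arcsin ((a * t - b) / (a - b * t))) with hG
    have hcS : Continuous fun t : ℝ => Real.sqrt (1 - t ^ 2) := by fun_prop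
    have hcu : ContinuousOn (fun t : ℝ => (a * t - b) / (a - b * t)) (Set.Icc (-1:ℝ) 1) :=
      ContinuousOn.div (by fun_prop) (by fun_prop) (fun t ht => (hden t ht.1 ht.2).ne')
    have hcont : ContinuousOn G (Set.Icc (-1:ℝ) 1) := by
      apply ContinuousOn.mul continuousOn_const
      apply ContinuousOn.sub
      · exact ((continuous_const.mul Real.continuous_arcsin).sub
          (continuous_const.mul hcS)).continuousOn
      · exact ContinuousOn.mul continuousOn_const (Real.continuous_arcsin.comp_continuousOn hcu)
    have hderiv : ∀ t ∈ Set.Ioo (-1:ℝ) 1,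
        HasDerivAt G (Real.sqrt (1 - t ^ 2) / (a - b * t)) t := by
      intro t ht
      have h1t : 0 < 1 - t ^ 2 := by nlinarith [ht.1, ht.2]
      have hd : 0 < a - b * t := hden t ht.1.le ht.2.le
      have hS : 0 < Real.sqrt (1 - t ^ 2) := Real.sqrt_pos.mpr h1t
      have hS2 : Real.sqrt (1 - t ^ 2) ^ 2 = 1 - t ^ 2 := Real.sq_sqrt h1t.le
      set S := Real.sqrt (1 - t ^ 2) with hSdef
      set u : ℝ := (a * t - b) / (a - b * t) with hu
      have hu2 : u ^ 2 < 1 := by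
        rw [hu, div_pow, div_lt_one (by positivity)]
        nlinarith
      have hu1 : u ≠ 1 := by intro h; rw [h] at hu2; norm_num at hu2
      have hum1 : u ≠ -1 := by intro h; rw [h] at hu2; norm_num at hu2
      have hsqrtu : Real.sqrt (1 - u ^ 2) = R * S / (a - b * t) := by
        rw [show 1 - u ^ 2 = (R * S / (a - b * t)) ^ 2 by
          rw [hu]; field_simp
          rw [eq_div_iff (pow_ne_zero 2 (ne_of_gt (by linarith [mul_comm t b]))), sub_mul,
            div_mul_cancel₀ _ (pow_ne_zero 2 (ne_of_gt (by linarith [mul_comm t b])))]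
          linear_combination (-S^2) * hR2 + (-(a^2-b^2)) * hS2]
        exact Real.sqrt_sq (by positivity)
      have h₁ : HasDerivAt Real.arcsin (1 / S) t :=
        Real.hasDerivAt_arcsin (ne_of_gt ht.1) (ne_of_lt ht.2)
      have hinner : HasDerivAt (fun x : ℝ => 1 - x ^ 2) (-(2 * t)) t := by
        simpa using ((hasDerivAt_pow 2 t).const_sub 1)
      have h₂ : HasDerivAt (fun x : ℝ => Real.sqrt (1 - x ^ 2)) (-(2 * t) / (2 * S)) t :=
        hinner.sqrt h1t.ne'
      have h₃ : HasDerivAt (fun x : ℝ => (a * x - b) / (a - b * x))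
          ((a * (a - b * t) - (a * t - b) * (-b)) / (a - b * t) ^ 2) t := by
        exact HasDerivAt.div (by simpa using ((hasDerivAt_id t).const_mul a).sub_const b)
          (by simpa using ((hasDerivAt_id t).const_mul b).const_sub a) hd.ne'
      have h₄ : HasDerivAt (fun x : ℝ => Real.arcsin ((a * x - b) / (a - b * x)))
          (1 / Real.sqrt (1 - u ^ 2) *
            ((a * (a - b * t) - (a * t - b) * (-b)) / (a - b * t) ^ 2)) t :=
        HasDerivAt.comp t (Real.hasDerivAt_arcsin hum1 hu1) h₃
      have hG' : HasDerivAt G (b⁻¹ * b⁻¹ *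
          (a * (1 / S) - b * (-(2 * t) / (2 * S))
            - R * (1 / Real.sqrt (1 - u ^ 2) *
              ((a * (a - b * t) - (a * t - b) * (-b)) / (a - b * t) ^ 2)))) t :=
        (((h₁.const_mul a).sub (h₂.const_mul b)).sub (h₄.const_mul R)).const_mul _
      rw [hsqrtu] at hG'
      have heq : b⁻¹ * b⁻¹ *
          (a * (1 / S) - b * (-(2 * t) / (2 * S))
            - R * (1 / (R * S / (a - b * t)) *
              ((a * (a - b * t) - (a * t - b) * (-b)) / (a - b * t) ^ 2)))
          = S / (a - b * t) := by
        field_simp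
        linear_combination (-b^2) * hS2
      rw [heq] at hG'
      exact hG'
    have hint : IntervalIntegrable (fun t => Real.sqrt (1 - t ^ 2) / (a - b * t))
        volume (-1) 1 := by
      apply ContinuousOn.intervalIntegrable
      rw [Set.uIcc_of_le (by norm_num : (-1:ℝ) ≤ 1)]
      exact ContinuousOn.div hcS.continuousOn (by fun_prop)
        (fun t ht => (hden t ht.1 ht.2).ne')
    rw [integral_eq_sub_of_hasDerivAt_of_le (by norm_num) hcont hderiv hint]
    have e1 : G 1 = b⁻¹ * b⁻¹ * (a * (Real.pi/2) - R * (Real.pi/2)) := by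
      rw [hG]
      have hne : a - b ≠ 0 := by
        have h6 := hden 1 (by norm_num) le_rfl
        rw [mul_one] at h6; exact h6.ne'
      have h5 : (a * 1 - b) / (a - b * 1) = 1 := by
        rw [mul_one, mul_one, div_self hne]
      simp only [h5]
      norm_num [Real.arcsin_one]
    have e2 : G (-1) = b⁻¹ * b⁻¹ * (-(a * (Real.pi/2)) + R * (Real.pi/2)) := by
      rw [hG]
      have hd' := hden (-1) le_rfl (by norm_num)
      have h5 : (a * (-1) - b) / (a - b * (-1)) = -1 := by
        rw [div_eq_iff hd'.ne']
        ring
      simp only [h5]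
      norm_num [Real.arcsin_neg, Real.arcsin_one]
    rw [e1, e2]
    have haR : 0 < a + R := by positivity
    field_simp
    linear_combination (-2) * hR2

/-- **Cauchy-type transform of the semicircle law.** For `|z|(|λ| + 2√η) < 1`,
`∫_ℝ 1/(1 − s z) dμ_{λ,η}(s) = 2 / (1 − λz + √((1 − λz)² − 4 z² η))`,
where the square root is the real square root and `(1 − λz)² − 4z²η > 0`. -/
theorem stmt3 (l e : ℝ) (he : 0 < e) (z : ℝ)
    (hz : |z| * (|l| + 2 * Real.sqrt e) < 1) :
    0 < (1 - l * z) ^ 2 - 4 * z ^ 2 * e ∧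
      ∫ s, (1 - s * z)⁻¹ ∂(semicircleLaw l e) =
        2 / (1 - l * z + Real.sqrt ((1 - l * z) ^ 2 - 4 * z ^ 2 * e)) := by
  have hse : 0 < Real.sqrt e := Real.sqrt_pos.mpr he
  have hse2 : Real.sqrt e ^ 2 = e := Real.sq_sqrt he.le
  set a : ℝ := 1 - l * z with hadef
  set b : ℝ := 2 * Real.sqrt e * z with hbdef
  have hb2 : b ^ 2 = 4 * z ^ 2 * e := by rw [hbdef, mul_pow, mul_pow]; rw [hse2]; ring
  have hba : |b| < a := by
    have habs : |b| = 2 * Real.sqrt e * |z| := by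
      rw [hbdef, abs_mul, abs_of_nonneg (by positivity : (0:ℝ) ≤ 2 * Real.sqrt e)]
    have h1 : l * z ≤ |l| * |z| := (le_abs_self _).trans (abs_mul l z).le
    rw [habs, hadef]
    nlinarith [abs_nonneg z, abs_nonneg l]
  have ha : 0 < a := (abs_nonneg b).trans_lt hba
  have hb'' := abs_lt.mp hba
  have hab2 : 0 < a ^ 2 - b ^ 2 := by nlinarith [hb''.1, hb''.2]
  have hkey : (1 - l * z) ^ 2 - 4 * z ^ 2 * e = a ^ 2 - b ^ 2 := by rw [hb2, hadef]
  constructor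
  · rw [hkey]; exact hab2
  have hmeas : Measurable fun s : ℝ =>
      Real.toNNReal ((2 * Real.pi * e)⁻¹ * Real.sqrt (max (4 * e - (s - l) ^ 2) 0)) := by
    fun_prop
  rw [show semicircleLaw l e = volume.withDensity (fun s : ℝ =>
      ((Real.toNNReal ((2 * Real.pi * e)⁻¹ * Real.sqrt (max (4 * e - (s - l) ^ 2) 0)) : ℝ≥0) :
        ENNReal)) from rfl]
  rw [integral_withDensity_eq_integral_smul hmeas]
  have hrw : ∀ s : ℝ,
      (Real.toNNReal ((2 * Real.pi * e)⁻¹ * Real.sqrt (max (4 * e - (s - l) ^ 2) 0)))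
        • (1 - s * z)⁻¹
      = (2 * Real.pi * e)⁻¹ *
          (Real.sqrt (max (4 * e - (s - l) ^ 2) 0) * (1 - s * z)⁻¹) := by
    intro s
    rw [NNReal.smul_def, Real.coe_toNNReal _ (by positivity), smul_eq_mul]
    ring
  simp only [hrw]
  have hvanish : ∀ s : ℝ,
      s ∉ Set.Icc (2 * Real.sqrt e * (-1) + l) (2 * Real.sqrt e * 1 + l) →
      (2 * Real.pi * e)⁻¹ *
          (Real.sqrt (max (4 * e - (s - l) ^ 2) 0) * (1 - s * z)⁻¹) = 0 := by
    intro s hs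
    rw [Set.mem_Icc, not_and_or] at hs
    have hle0 : 4 * e - (s - l) ^ 2 ≤ 0 := by
      rcases hs with h | h
      · push_neg at h; nlinarith [hse2]
      · push_neg at h; nlinarith [hse2]
    rw [max_eq_right hle0, Real.sqrt_zero]
    ring
  rw [← setIntegral_eq_integral_of_forall_compl_eq_zero hvanish]
  have hle : 2 * Real.sqrt e * (-1) + l ≤ 2 * Real.sqrt e * 1 + l := by nlinarith
  rw [MeasureTheory.integral_Icc_eq_integral_Ioc, ← intervalIntegral.integral_of_le hle]
  rw [intervalIntegral.integral_const_mul]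
  rw [← intervalIntegral.smul_integral_comp_mul_add
    (f := fun s => Real.sqrt (max (4 * e - (s - l) ^ 2) 0) * (1 - s * z)⁻¹)
    (a := -1) (b := 1) (2 * Real.sqrt e) l]
  have hcongr : Set.EqOn
      (fun t : ℝ => Real.sqrt (max (4 * e - (2 * Real.sqrt e * t + l - l) ^ 2) 0) *
        (1 - (2 * Real.sqrt e * t + l) * z)⁻¹)
      (fun t : ℝ => 2 * Real.sqrt e * (Real.sqrt (1 - t ^ 2) / (a - b * t)))
      (Set.uIcc (-1:ℝ) 1) := by
    intro t ht
    rw [Set.uIcc_of_le (by norm_num : (-1:ℝ) ≤ 1)] at ht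
    have h1t : 0 ≤ 1 - t ^ 2 := by nlinarith [ht.1, ht.2]
    simp only
    have e1 : max (4 * e - (2 * Real.sqrt e * t + l - l) ^ 2) 0
        = (2 * Real.sqrt e) ^ 2 * (1 - t ^ 2) := by
      rw [max_eq_left (by nlinarith [hse2])]
      linear_combination (-4 : ℝ) * hse2
    rw [e1, Real.sqrt_mul (sq_nonneg _), Real.sqrt_sq (by positivity : (0:ℝ) ≤ 2 * Real.sqrt e)]
    rw [show 1 - (2 * Real.sqrt e * t + l) * z = a - b * t by rw [hadef, hbdef]; ring]
    rw [div_eq_mul_inv]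
    ring
  rw [intervalIntegral.integral_congr hcongr, intervalIntegral.integral_const_mul,
    key_semicircle_integral a b hba]
  rw [show a ^ 2 - 4 * z ^ 2 * e = a ^ 2 - b ^ 2 by rw [hb2]]
  rw [smul_eq_mul]
  rw [show 2 * Real.sqrt e * (2 * Real.sqrt e *
      (Real.pi / (a + Real.sqrt (a ^ 2 - b ^ 2))))
    = 4 * e * (Real.pi / (a + Real.sqrt (a ^ 2 - b ^ 2))) by
      linear_combination (4 * (Real.pi / (a + Real.sqrt (a ^ 2 - b ^ 2)))) *
        Real.mul_self_sqrt he.le]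
  have hR : 0 < Real.sqrt (a ^ 2 - b ^ 2) := Real.sqrt_pos.mpr hab2
  have haR : (0:ℝ) < a + Real.sqrt (a ^ 2 - b ^ 2) := by positivity
  have hpi := Real.pi_pos
  rw [show (2 * Real.pi * e)⁻¹ * (4 * e * (Real.pi / (a + Real.sqrt (a ^ 2 - b ^ 2))))
      = (4 * e * Real.pi / (2 * Real.pi * e)) / (a + Real.sqrt (a ^ 2 - b ^ 2)) by ring]
  rw [show 4 * e * Real.pi / (2 * Real.pi * e) = 2 by
    field_simp
    ring]
end

section
/- Let T be a locally compact, second countable Hausdorff topological space, let σ be a Radon measure on T, and let μ be a Markov kernel from T to ℝ such that for every relatively compact Borel set Δ ⊆ T there exists R > 0 with μ(t, ℝ ∖ [−R,R]) = 0 for all t ∈ Δ. Let σ̃ be the measure on T × ℝ given by σ̃(dt,ds) = σ(dt) μ(t,ds). If g ∈ L²(T × ℝ, σ̃) satisfies ∫_{Δ×ℝ} s^n g(t,s) dσ̃(t,s) = 0 for every relatively compact Borel set Δ ⊆ T and every n ∈ ℕ, then g = 0 σ̃-almost everywhere. Equivalently, the linear span of the functions (t,s) ↦ χ_Δ(t)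 s^n, over relatively compact Borel sets Δ ⊆ T and n ∈ ℕ, is dense in L²(T × ℝ, σ̃). -/
open MeasureTheory ProbabilityTheory

/-- Restricting the first factor of a composition–product. -/
lemma compProd_restrict_left_aux {T : Type*} [MeasurableSpace T] (σ : Measure T) [SFinite σ]
    (μ : Kernel T ℝ) [IsSFiniteKernel μ] {K : Set T} (hK : MeasurableSet K) :
    (σ.restrict K) ⊗ₘ μ = (σ ⊗ₘ μ).restrict (K ×ˢ (Set.univ : Set ℝ)) := by
  ext s hs
  rw [Measure.restrict_apply hs, Measure.compProd_apply hs,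
    Measure.compProd_apply (hs.inter (hK.prod MeasurableSet.univ)),
    ← lintegral_indicator hK]
  congr 1
  funext t
  by_cases ht : t ∈ K
  · rw [Set.indicator_of_mem ht]
    congr 1
    ext s'
    simp [ht]
  · rw [Set.indicator_of_notMem ht]
    have : Prod.mk t ⁻¹' (s ∩ K ×ˢ (Set.univ : Set ℝ)) = ∅ := by
      ext s'; simp [ht]
    simp [this]

/-- A compactly supported finite measure on `ℝ` for which all moments against an integrable
function vanish forces the function to vanish a.e. -/
lemma aux_moments {ν : Measure ℝ} [IsFiniteMeasure ν] {R : ℝ} (hR : 0 < R)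
    (hsupp : ν (Set.Icc (-R) R)ᶜ = 0) {h : ℝ → ℝ} (hint : Integrable h ν)
    (hmom : ∀ n : ℕ, ∫ s, s ^ n * h s ∂ν = 0) : ∀ᵐ s ∂ν, h s = 0 := by
  have haeR : ∀ᵐ s ∂ν, s ∈ Set.Icc (-R) R := by
    rw [ae_iff]
    exact hsupp
  have hRabs : ∀ᵐ s ∂ν, |s| ≤ R := haeR.mono fun s hs => abs_le.mpr ⟨hs.1, hs.2⟩
  have hintn : ∀ n : ℕ, Integrable (fun s => s ^ n * h s) ν := by
    intro n
    refine Integrable.mono' (hint.norm.const_mul (R ^ n))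
      ((measurable_id.pow_const n).aestronglyMeasurable.mul hint.1) ?_
    filter_upwards [hRabs] with s hs
    rw [norm_mul, Real.norm_eq_abs, abs_pow]
    exact mul_le_mul_of_nonneg_right (pow_le_pow_left₀ (abs_nonneg _) hs n) (norm_nonneg _)
  have hintp : ∀ p : Polynomial ℝ, Integrable (fun s => p.eval s * h s) ν := by
    intro p
    have heq : (fun s => p.eval s * h s) =
        fun s => ∑ i ∈ Finset.range (p.natDegree + 1), p.coeff i * (s ^ i * h s) := by
      funext s
      rw [Polynomial.eval_eq_sum_range, Finset.sum_mul]
      simp [mul_assoc]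
    rw [heq]
    exact integrable_finset_sum _ fun i _ => (hintn i).const_mul _
  have hpoly : ∀ p : Polynomial ℝ, ∫ s, p.eval s * h s ∂ν = 0 := by
    intro p
    have heq : (fun s => p.eval s * h s) =
        fun s => ∑ i ∈ Finset.range (p.natDegree + 1), p.coeff i * (s ^ i * h s) := by
      funext s
      rw [Polynomial.eval_eq_sum_range, Finset.sum_mul]
      simp [mul_assoc]
    rw [heq, integral_finset_sum _ fun i _ => (hintn i).const_mul _]
    simp [integral_const_mul, hmom]
  have hcont : ∀ φ : ℝ → ℝ, Continuous φ → HasCompactSupport φ →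
      ∫ s, φ s * h s ∂ν = 0 := by
    intro φ hφ hφc
    obtain ⟨C, hC⟩ := hφc.exists_bound_of_continuous hφ
    have hφint : Integrable (fun s => φ s * h s) ν := by
      refine Integrable.mono' (hint.norm.const_mul C) (hφ.aestronglyMeasurable.mul hint.1) ?_
      filter_upwards with s
      rw [norm_mul]
      exact mul_le_mul_of_nonneg_right (hC s) (norm_nonneg _)
    set Ch : ℝ := ∫ s, |h s| ∂ν with hCh
    have hChnn : 0 ≤ Ch := integral_nonneg fun s => abs_nonneg _
    have key : ∀ ε : ℝ, 0 < ε → |∫ s, φ s * h s ∂ν| ≤ ε * Ch := by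
      intro ε hε
      obtain ⟨p, hp⟩ := exists_polynomial_near_of_continuousOn (-R) R φ hφ.continuousOn ε hε
      have hsubint : Integrable (fun s => (φ s - p.eval s) * h s) ν := by
        have := hφint.sub (hintp p)
        simp only [sub_mul]; exact this
      calc |∫ s, φ s * h s ∂ν| = |∫ s, (φ s - p.eval s) * h s ∂ν| := by
            rw [show (fun s => (φ s - p.eval s) * h s)
                = fun s => φ s * h s - p.eval s * h s from funext fun s => sub_mul _ _ _,
              integral_sub hφint (hintp p), hpoly p, sub_zero]
        _ ≤ ∫ s, |(φ s - p.eval s) * h s| ∂ν := by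
            exact norm_integral_le_integral_norm fun s => (φ s - p.eval s) * h s
        _ ≤ ∫ s, ε * |h s| ∂ν := by
            refine integral_mono_ae hsubint.abs (hint.abs.const_mul ε) ?_
            filter_upwards [haeR] with s hs
            rw [abs_mul]
            refine mul_le_mul_of_nonneg_right ?_ (abs_nonneg _)
            rw [abs_sub_comm]
            exact (hp s hs).le
        _ = ε * Ch := integral_const_mul ε _
    have habs : |∫ s, φ s * h s ∂ν| ≤ 0 := by
      refine le_of_forall_pos_le_add fun ε hε => ?_
      have h2 := key (ε / (Ch + 1)) (by positivity)
      have h3 : ε / (Ch + 1) * Ch ≤ ε := by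
        rw [div_mul_eq_mul_div, div_le_iff₀ (by positivity)]
        nlinarith
      linarith
    exact abs_eq_zero.mp (le_antisymm habs (abs_nonneg _))
  refine ae_eq_zero_of_integral_contDiff_smul_eq_zero hint.locallyIntegrable ?_
  intro φ hφd hφc
  simpa [smul_eq_mul] using hcont φ hφd.continuous hφc

/-- **Totality of the functions `χ_Δ(t) sⁿ` in `L²(T × ℝ, σ̃)`**, where
`σ̃(dt,ds) = σ(dt)μ(t,ds)`. If `g ∈ L²(T × ℝ, σ̃)` satisfies
`∫_{Δ×ℝ} sⁿ g(t,s) dσ̃ = 0` for every relatively compact Borel `Δ ⊆ T` and every `n ∈ ℕ`,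
then `g = 0` `σ̃`-a.e. -/
theorem stmt7
    {T : Type*} [TopologicalSpace T] [LocallyCompactSpace T]
    [SecondCountableTopology T] [T2Space T]
    [MeasurableSpace T] [BorelSpace T]
    (σ : Measure T) [σ.Regular]
    (μ : Kernel T ℝ) [IsMarkovKernel μ]
    (hμ : ∀ Δ : Set T, MeasurableSet Δ → IsCompact (closure Δ) →
      ∃ R > (0 : ℝ), ∀ t ∈ Δ, μ t (Set.Icc (-R) R)ᶜ = 0)
    (g : T × ℝ → ℝ) (hg : MemLp g 2 (σ ⊗ₘ μ))
    (hmom : ∀ Δ : Set T, MeasurableSet Δ → IsCompact (closure Δ) → ∀ n : ℕ,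
      ∫ p in Δ ×ˢ (Set.univ : Set ℝ), p.2 ^ n * g p ∂(σ ⊗ₘ μ) = 0) :
    ∀ᵐ p ∂(σ ⊗ₘ μ), g p = 0 := by
  -- pass to a strongly measurable representative
  obtain ⟨g', hg'meas, hgg'⟩ : ∃ g', StronglyMeasurable g' ∧ g =ᵐ[σ ⊗ₘ μ] g' :=
    ⟨hg.1.mk g, hg.1.stronglyMeasurable_mk, hg.1.ae_eq_mk⟩
  have hg' : MemLp g' 2 (σ ⊗ₘ μ) := hg.ae_eq hgg'
  have hmom' : ∀ Δ : Set T, MeasurableSet Δ → IsCompact (closure Δ) → ∀ n : ℕ,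
      ∫ p in Δ ×ˢ (Set.univ : Set ℝ), p.2 ^ n * g' p ∂(σ ⊗ₘ μ) = 0 := by
    intro Δ hΔ hΔc n
    rw [← hmom Δ hΔ hΔc n]
    refine setIntegral_congr_ae (hΔ.prod MeasurableSet.univ) ?_
    filter_upwards [hgg'] with p hp _
    rw [hp]
  suffices h : ∀ᵐ p ∂(σ ⊗ₘ μ), g' p = 0 by
    filter_upwards [h, hgg'] with p h1 h2
    rw [h2, h1]
  have hgmeas : Measurable g' := hg'meas.measurable
  -- main step: on every compact set
  have keyA : ∀ K : Set T, IsCompact K → ∀ᵐ t ∂σ.restrict K, ∀ᵐ s ∂μ t, g' (t, s) = 0 := by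
    intro K hK
    have hKm : MeasurableSet K := hK.isClosed.measurableSet
    obtain ⟨R, hR, hRK⟩ := hμ K hKm (by rwa [hK.isClosed.closure_eq])
    haveI : IsFiniteMeasure (σ.restrict K) :=
      ⟨by rw [Measure.restrict_apply_univ]; exact hK.measure_lt_top⟩
    have hrestr : (σ.restrict K) ⊗ₘ μ = (σ ⊗ₘ μ).restrict (K ×ˢ (Set.univ : Set ℝ)) :=
      compProd_restrict_left_aux σ μ hKm
    have hgK : MemLp g' 2 ((σ.restrict K) ⊗ₘ μ) := by rw [hrestr]; exact hg'.restrict _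
    have hint : Integrable g' ((σ.restrict K) ⊗ₘ μ) := hgK.integrable one_le_two
    have hnull : ((σ.restrict K) ⊗ₘ μ) {p : T × ℝ | p.2 ∉ Set.Icc (-R) R} = 0 := by
      have hms : MeasurableSet {p : T × ℝ | p.2 ∉ Set.Icc (-R) R} :=
        measurableSet_Icc.compl.preimage measurable_snd
      rw [Measure.compProd_apply hms]
      have : ∀ᵐ t ∂σ.restrict K,
          μ t (Prod.mk t ⁻¹' {p : T × ℝ | p.2 ∉ Set.Icc (-R) R}) = 0 := by
        refine (ae_restrict_iff' hKm).mpr (Filter.Eventually.of_forall fun t ht => ?_)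
        exact hRK t ht
      rw [lintegral_congr_ae this, lintegral_zero]
    have haeR : ∀ᵐ p ∂((σ.restrict K) ⊗ₘ μ), p.2 ∈ Set.Icc (-R) R := by
      rw [ae_iff]; exact hnull
    have hintn : ∀ n : ℕ, Integrable (fun p : T × ℝ => p.2 ^ n * g' p)
        ((σ.restrict K) ⊗ₘ μ) := by
      intro n
      refine Integrable.mono' (hint.norm.const_mul (R ^ n))
        (((measurable_snd.pow_const n).mul hgmeas).aestronglyMeasurable) ?_
      filter_upwards [haeR] with p hp
      rw [norm_mul, Real.norm_eq_abs, abs_pow]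
      exact mul_le_mul_of_nonneg_right
        (pow_le_pow_left₀ (abs_nonneg _) (abs_le.mpr ⟨hp.1, hp.2⟩) n) (norm_nonneg _)
    have hIOn : ∀ n : ℕ, IntegrableOn (fun p : T × ℝ => p.2 ^ n * g' p)
        (K ×ˢ (Set.univ : Set ℝ)) (σ ⊗ₘ μ) := by
      intro n; rw [IntegrableOn, ← hrestr]; exact hintn n
    set F : ℕ → T → ℝ := fun n t => ∫ s, s ^ n * g' (t, s) ∂μ t with hF
    have hFmeas : ∀ n, StronglyMeasurable (F n) := fun n =>
      (((measurable_snd.pow_const n).mul hgmeas).stronglyMeasurable).integral_kernel_prod_right'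
    have hFint : ∀ n, Integrable (F n) (σ.restrict K) := by
      intro n
      have h1 := (Measure.integrable_compProd_iff (hintn n).1).mp (hintn n)
      refine Integrable.mono' h1.2 (hFmeas n).aestronglyMeasurable ?_
      filter_upwards with t
      exact norm_integral_le_integral_norm _
    have hFzero : ∀ n, F n =ᵐ[σ.restrict K] 0 := by
      intro n
      refine (hFint n).ae_eq_zero_of_forall_setIntegral_eq_zero fun s hs _ => ?_
      rw [Measure.restrict_restrict hs]
      have hclos : IsCompact (closure (s ∩ K)) :=
        hK.of_isClosed_subset isClosed_closure
          ((closure_mono Set.inter_subset_right).trans hK.isClosed.closure_eq.subset)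
      have hmm := hmom' (s ∩ K) (hs.inter hKm) hclos n
      rw [Measure.setIntegral_compProd (hs.inter hKm) MeasurableSet.univ
        ((hIOn n).mono_set (Set.prod_mono Set.inter_subset_right subset_rfl))] at hmm
      simpa [Measure.restrict_univ] using hmm
    have hsect : ∀ᵐ t ∂σ.restrict K, Integrable (fun s => g' (t, s)) (μ t) :=
      ((Measure.integrable_compProd_iff hint.1).mp hint).1
    have hsupp : ∀ᵐ t ∂σ.restrict K, μ t (Set.Icc (-R) R)ᶜ = 0 :=
      (ae_restrict_iff' hKm).mpr (Filter.Eventually.of_forall fun t ht => hRK t ht)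
    have hFz : ∀ᵐ t ∂σ.restrict K, ∀ n, F n t = 0 :=
      ae_all_iff.mpr fun n => hFzero n
    filter_upwards [hsect, hsupp, hFz] with t h1 h2 h3
    exact aux_moments hR h2 h1 h3
  -- combine using σ-compactness
  have hae : ∀ᵐ t ∂σ, ∀ᵐ s ∂μ t, g' (t, s) = 0 := by
    rw [ae_iff]
    set N := {t : T | ¬ ∀ᵐ s ∂μ t, g' (t, s) = 0} with hN
    have hcov : N ⊆ ⋃ n, N ∩ compactCovering T n := by
      intro t ht
      have : t ∈ ⋃ n, compactCovering T n := by
        rw [iUnion_compactCovering]; trivial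
      obtain ⟨n, hn⟩ := Set.mem_iUnion.mp this
      exact Set.mem_iUnion.mpr ⟨n, ht, hn⟩
    refine measure_mono_null hcov (measure_iUnion_null fun n => ?_)
    have hKn := isCompact_compactCovering T n
    have h := keyA _ hKn
    rw [ae_iff] at h
    rw [← Measure.restrict_apply' hKn.isClosed.measurableSet]
    exact h
  exact Measure.ae_compProd_of_ae_ae (hgmeas (measurableSet_singleton 0)) hae
end

section
/- Let T be a locally compact, second countable Hausdorff topological space, let σ be a Radon measure on T, and let λ, η : T → ℝ be continuous with η(t) ≥ 0 for all t. For t ∈ T let μ_t be the semicircle law with mean λ(t) and variance η(t) if η(t) > 0, and the Dirac measure at λ(t) if η(t) = 0. Then for every relatively compact Borel set Δ ⊆ T there exists r > 0 such that for every Borel measurable f : T → ℝ vanishing outside Δ with |f(t)| < r for all t ∈ T, the series ∑_{n=2}^∞ ∫_T f(t)^n (∫_ℝ s^{n−2} dμ_t(s)) dσ(t) converges absolutely and its sum equals ∫_T 2 f(t)² (1 − λ(t) f(t) + √((1 − λ(t) f(t))² − 4 f(t)² η(t)))^{−1} dσ(t), where the square root is the real square root and (1 − λ(t)f(t))² − 4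 f(t)² η(t) > 0 for all t ∈ Δ. -/
open MeasureTheory

/-- The distribution at a point `t` of the free Meixner process with parameters
`λ, η : T → ℝ`: the semicircle law with mean `λ(t)` and variance `η(t)` if `η(t) > 0`,
and the Dirac measure at `λ(t)` if `η(t) = 0`. -/
noncomputable def meixnerDist {T : Type*} [MeasurableSpace T]
    (lam eta : T → ℝ) (t : T) : Measure ℝ :=
  if eta t = 0 then Measure.dirac (lam t) else semicircleLaw (lam t) (eta t)


open Real Set intervalIntegral
open scoped ENNReal NNReal

lemma key_integral {a b : ℝ} (hb : b ≠ 0) (hab : |b| < a) :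
    ∫ u in (-1:ℝ)..1, Real.sqrt (1 - u^2) / (a - b*u)
      = Real.pi * (a - Real.sqrt (a^2 - b^2)) / b^2 := by
  have ha : 0 < a := lt_of_le_of_lt (abs_nonneg b) hab
  have hD : 0 < a^2 - b^2 := by
    have : b^2 < a^2 := by
      have := sq_lt_sq' (neg_lt_of_abs_lt hab) (lt_of_abs_lt hab)
      nlinarith [abs_nonneg b]
    linarith
  have hden : ∀ u : ℝ, u ∈ Icc (-1:ℝ) 1 → 0 < a - b * u := by
    intro u hu
    have h1 : |b * u| ≤ |b| := by
      rw [abs_mul]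
      have : |u| ≤ 1 := abs_le.2 ⟨hu.1, hu.2⟩
      nlinarith [abs_nonneg b]
    have := le_of_abs_le h1
    linarith [lt_of_abs_lt hab]
  set D := a^2 - b^2 with hDdef
  set F : ℝ → ℝ := fun u => -Real.sqrt (1 - u^2)/b + (a/b^2) * Real.arcsin u
      + (Real.sqrt D/b^2) * Real.arcsin ((b - a*u)/(a - b*u)) with hF
  have hcont : ContinuousOn F (Icc (-1:ℝ) 1) := by
    apply ContinuousOn.add
    apply ContinuousOn.add
    · exact (((continuous_const.sub (continuous_pow 2)).sqrt.neg.div_const b).continuousOn)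
    · exact (continuous_const.mul Real.continuous_arcsin).continuousOn
    · refine ContinuousOn.mul continuousOn_const (Real.continuous_arcsin.comp_continuousOn ?_)
      exact ContinuousOn.div (continuous_const.sub (continuous_const.mul continuous_id)).continuousOn
        (continuous_const.sub (continuous_const.mul continuous_id)).continuousOn
        (fun u hu => ne_of_gt (hden u hu))
  have hderiv : ∀ u ∈ Ioo (-1:ℝ) 1,
      HasDerivAt F (Real.sqrt (1 - u^2) / (a - b*u)) u := by
    intro u hu
    have hW : 0 < 1 - u^2 := by nlinarith [hu.1, hu.2]
    have hWne : Real.sqrt (1 - u^2) ≠ 0 := ne_of_gt (Real.sqrt_pos.2 hW)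
    have hdu : 0 < a - b * u := hden u (Ioo_subset_Icc_self hu)
    -- derivative of sqrt(1-u^2)
    have d1 : HasDerivAt (fun u : ℝ => Real.sqrt (1 - u^2)) (-u / Real.sqrt (1 - u^2)) u := by
      have h := (Real.hasDerivAt_sqrt (ne_of_gt hW)).comp u
        (((hasDerivAt_pow 2 u).const_sub 1))
      refine h.congr_deriv ?_
      field_simp
      ring
    -- derivative of g
    set g : ℝ → ℝ := fun u => (b - a*u)/(a - b*u) with hg
    have dg : HasDerivAt g ((b^2 - a^2)/(a - b*u)^2) u := by
      have h := ((hasDerivAt_id u).const_mul a |>.const_sub b).div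
        ((hasDerivAt_id u).const_mul b |>.const_sub a) (ne_of_gt hdu)
      refine h.congr_deriv ?_
      field_simp [id_eq, hdu.ne']
      unfold id
      ring
    have hg2 : 1 - g u ^ 2 = D * (1 - u^2) / (a - b*u)^2 := by
      rw [hg]
      field_simp
      ring
    have hgsq : Real.sqrt (1 - g u ^ 2) = Real.sqrt D * Real.sqrt (1 - u^2) / (a - b*u) := by
      rw [hg2, hDdef]
      rw [show (a^2-b^2)*(1-u^2)/(a-b*u)^2 = (Real.sqrt (a^2-b^2) * Real.sqrt (1-u^2)/(a-b*u))^2 by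
        rw [div_pow, mul_pow, Real.sq_sqrt (by linarith : (0:ℝ) ≤ a^2-b^2), Real.sq_sqrt hW.le]]
      exact Real.sqrt_sq (by positivity)
    have darc : HasDerivAt (fun u => Real.arcsin (g u))
        (-Real.sqrt D/(Real.sqrt (1-u^2) * (a - b*u))) u := by
      have hglt : g u ^ 2 < 1 := by
        have h1 : 0 < 1 - g u ^ 2 := by rw [hg2]; positivity
        linarith
      have hg1 : g u ≠ -1 := by
        intro h; rw [h] at hglt; norm_num at hglt
      have hg1' : g u ≠ 1 := by
        intro h; rw [h] at hglt; norm_num at hglt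
      have h := (Real.hasDerivAt_arcsin hg1 hg1').comp u dg
      refine h.congr_deriv ?_
      rw [hgsq]
      have hDne : Real.sqrt D ≠ 0 := ne_of_gt (Real.sqrt_pos.2 hD)
      field_simp
      rw [hDdef]
      ring_nf
      rw [Real.sq_sqrt (by linarith : (0:ℝ) ≤ -b^2+a^2)]
      ring
    have dF : HasDerivAt F
        (-(-u / Real.sqrt (1 - u^2))/b + (a/b^2) * (1/Real.sqrt (1-u^2))
          + (Real.sqrt D/b^2) * (-Real.sqrt D/(Real.sqrt (1-u^2) * (a - b*u)))) u := by
      exact (((d1.neg.div_const b).add ((Real.hasDerivAt_arcsin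
        (by intro h; rw [h] at hW; norm_num at hW
          : u ≠ -1) (by intro h; rw [h] at hW; norm_num at hW : u ≠ 1)).const_mul
        (a/b^2))).add (darc.const_mul (Real.sqrt D/b^2)))
    convert dF using 1
    have hsq : Real.sqrt D * Real.sqrt D = D := Real.mul_self_sqrt hD.le
    have hWW : Real.sqrt (1-u^2) * Real.sqrt (1-u^2) = 1 - u^2 := Real.mul_self_sqrt hW.le
    have hdu2 : a - u*b ≠ 0 := by rw [mul_comm]; exact hdu.ne'
    field_simp
    rw [hDdef]
    linear_combination b^2 * hWW + Real.sq_sqrt (hD.le : (0:ℝ) ≤ a^2-b^2)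
  have hInt : IntervalIntegrable (fun u => Real.sqrt (1 - u^2) / (a - b*u)) volume (-1) 1 := by
    apply ContinuousOn.intervalIntegrable
    rw [uIcc_of_le (by norm_num : (-1:ℝ) ≤ 1)]
    exact ContinuousOn.div (continuous_const.sub (continuous_pow 2)).sqrt.continuousOn
      (continuous_const.sub (continuous_const.mul continuous_id)).continuousOn
      (fun u hu => ne_of_gt (hden u hu))
  rw [integral_eq_sub_of_hasDeriv_right_of_le (by norm_num) hcont
    (fun u hu => (hderiv u hu).hasDerivWithinAt) hInt]
  rw [hF]
  simp only
  have e1 : (b - a*1)/(a - b*1) = -1 := by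
    rw [mul_one, mul_one]
    rw [div_eq_iff (by linarith [lt_of_abs_lt hab, le_abs_self b] : a - b ≠ 0)]
    ring
  have e2 : (b - a*(-1))/(a - b*(-1)) = 1 := by
    have : a + b > 0 := by linarith [neg_lt_of_abs_lt hab]
    rw [div_eq_iff (by intro h; rw [mul_neg_one, sub_neg_eq_add] at h; linarith)]
    ring
  rw [e1, e2]
  simp [Real.arcsin_one, Real.arcsin_neg_one]
  ring


noncomputable def rho (l e s : ℝ) : ℝ :=
  (2 * Real.pi * e)⁻¹ * Real.sqrt (max (4 * e - (s - l) ^ 2) 0)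

lemma rho_nonneg {l e : ℝ} (he : 0 ≤ e) (s : ℝ) : 0 ≤ rho l e s := by
  unfold rho; positivity

lemma rho_cont (l e : ℝ) : Continuous (rho l e) := by
  unfold rho
  exact continuous_const.mul ((continuous_const.sub
    ((continuous_id.sub continuous_const).pow 2)).max continuous_const).sqrt

lemma rho_zero {l e s : ℝ} (he : 0 ≤ e)
    (hs : s ∉ Set.Icc (l - 2*Real.sqrt e) (l + 2*Real.sqrt e)) : rho l e s = 0 := by
  have h4 : (2*Real.sqrt e)^2 = 4*e := by
    rw [mul_pow, Real.sq_sqrt he]; norm_num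
  have : 4*e - (s - l)^2 ≤ 0 := by
    rw [Set.mem_Icc, not_and_or] at hs
    rcases hs with h | h
    · push_neg at h; nlinarith [Real.sqrt_nonneg e]
    · push_neg at h; nlinarith [Real.sqrt_nonneg e]
  unfold rho
  rw [max_eq_right this, Real.sqrt_zero, mul_zero]

lemma rho_le {l e : ℝ} (he : 0 ≤ e) (s : ℝ) :
    rho l e s ≤ (2 * Real.pi * e)⁻¹ * (2*Real.sqrt e) := by
  unfold rho
  have h1 : Real.sqrt (max (4 * e - (s - l) ^ 2) 0) ≤ 2*Real.sqrt e := by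
    rw [show (2:ℝ)*Real.sqrt e = Real.sqrt (4*e) by
      rw [show (4:ℝ)*e = 2^2*e by norm_num, Real.sqrt_mul (by positivity) e,
        Real.sqrt_sq (by norm_num)]]
    exact Real.sqrt_le_sqrt (max_le (by nlinarith [sq_nonneg (s-l)]) (by positivity))
  have h2 : (0:ℝ) ≤ (2 * Real.pi * e)⁻¹ := by positivity
  exact mul_le_mul_of_nonneg_left h1 h2

lemma semicircle_integral (l e : ℝ) (he : 0 ≤ e) (g : ℝ → ℝ) :
    ∫ s, g s ∂(semicircleLaw l e) = ∫ s, rho l e s * g s := by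
  have hm : Measurable fun s : ℝ => (rho l e s).toNNReal :=
    (continuous_real_toNNReal.comp (rho_cont l e)).measurable
  have h1 : semicircleLaw l e = volume.withDensity fun s => ((rho l e s).toNNReal : ℝ≥0∞) := rfl
  rw [h1, integral_withDensity_eq_integral_smul hm g]
  congr 1; ext s
  rw [NNReal.smul_def, smul_eq_mul, Real.coe_toNNReal _ (rho_nonneg he s)]

lemma semicircle_ae_mem {l e : ℝ} (he : 0 ≤ e) :
    ∀ᵐ s ∂(semicircleLaw l e), s ∈ Set.Icc (l - 2*Real.sqrt e) (l + 2*Real.sqrt e) := by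
  rw [ae_iff]
  have hmeas : MeasurableSet (Set.Icc (l - 2*Real.sqrt e) (l + 2*Real.sqrt e))ᶜ :=
    measurableSet_Icc.compl
  have h1 : {s : ℝ | ¬ s ∈ Set.Icc (l - 2*Real.sqrt e) (l + 2*Real.sqrt e)}
      = (Set.Icc (l - 2*Real.sqrt e) (l + 2*Real.sqrt e))ᶜ := rfl
  rw [h1, semicircleLaw, withDensity_apply _ hmeas]
  rw [show (fun s : ℝ => ENNReal.ofReal ((2 * Real.pi * e)⁻¹
      * Real.sqrt (max (4 * e - (s - l) ^ 2) 0))) = fun s => ENNReal.ofReal (rho l e s) from rfl]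
  rw [setLIntegral_congr_fun hmeas (
    (fun s hs => by rw [rho_zero he hs, ENNReal.ofReal_zero]))]
  simp

lemma semicircle_mass {l e : ℝ} (he : 0 < e) : (semicircleLaw l e) Set.univ ≤ 2 := by
  rw [semicircleLaw, withDensity_apply _ MeasurableSet.univ, Measure.restrict_univ]
  rw [show (fun s : ℝ => ENNReal.ofReal ((2 * Real.pi * e)⁻¹
      * Real.sqrt (max (4 * e - (s - l) ^ 2) 0))) = fun s => ENNReal.ofReal (rho l e s) from rfl]
  set I := Set.Icc (l - 2*Real.sqrt e) (l + 2*Real.sqrt e) with hI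
  have hbound : ∀ s : ℝ, ENNReal.ofReal (rho l e s)
      ≤ I.indicator (fun _ => ENNReal.ofReal ((2 * Real.pi * e)⁻¹ * (2*Real.sqrt e))) s := by
    intro s
    by_cases hs : s ∈ I
    · rw [Set.indicator_of_mem hs]
      exact ENNReal.ofReal_le_ofReal (rho_le he.le s)
    · rw [Set.indicator_of_notMem hs, rho_zero he.le hs, ENNReal.ofReal_zero]
  calc ∫⁻ s, ENNReal.ofReal (rho l e s)
      ≤ ∫⁻ s, I.indicator (fun _ => ENNReal.ofReal ((2 * Real.pi * e)⁻¹ * (2*Real.sqrt e))) s :=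
        lintegral_mono hbound
    _ = ENNReal.ofReal ((2 * Real.pi * e)⁻¹ * (2*Real.sqrt e)) * volume I := by
        rw [lintegral_indicator measurableSet_Icc, setLIntegral_const]
    _ = ENNReal.ofReal ((2 * Real.pi * e)⁻¹ * (2*Real.sqrt e)) * ENNReal.ofReal (4 * Real.sqrt e) := by
        rw [hI, Real.volume_Icc]; congr 1; ring
    _ = ENNReal.ofReal ((2 * Real.pi * e)⁻¹ * (2*Real.sqrt e) * (4 * Real.sqrt e)) := by
        rw [← ENNReal.ofReal_mul (by positivity)]
    _ ≤ 2 := by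
        rw [show (2 * Real.pi * e)⁻¹ * (2*Real.sqrt e) * (4 * Real.sqrt e) = 4 / Real.pi by
          have hss : Real.sqrt e * Real.sqrt e = e := Real.mul_self_sqrt he.le
          have hπ := Real.pi_pos
          field_simp
          linear_combination hss]
        rw [show (2 : ℝ≥0∞) = ENNReal.ofReal 2 by norm_num]
        apply ENNReal.ofReal_le_ofReal
        rw [div_le_iff₀ Real.pi_pos]
        nlinarith [Real.pi_gt_three]

lemma semicircle_finite {l e : ℝ} (he : 0 < e) : IsFiniteMeasure (semicircleLaw l e) :=
  ⟨lt_of_le_of_lt (semicircle_mass he) (by norm_num)⟩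

lemma semicircle_moment_bound {l e M : ℝ} (he : 0 < e) (hM : |l| + 2*Real.sqrt e ≤ M) (n : ℕ) :
    |∫ s, s^n ∂(semicircleLaw l e)| ≤ 2 * M^n := by
  haveI := semicircle_finite (l := l) he
  have hM0 : (0:ℝ) ≤ M := le_trans (by positivity) hM
  have hb : ∀ᵐ s ∂(semicircleLaw l e), ‖s^n‖ ≤ M^n := by
    refine (semicircle_ae_mem he.le).mono (fun s hs => ?_)
    rw [Real.norm_eq_abs, abs_pow]
    refine pow_le_pow_left₀ (abs_nonneg s) ?_ n
    rw [abs_le]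
    constructor
    · have := hs.1; have := neg_abs_le l; nlinarith [Real.sqrt_nonneg e]
    · have := hs.2; have := le_abs_self l; nlinarith [Real.sqrt_nonneg e]
  have h1 := norm_integral_le_of_norm_le_const hb
  rw [Real.norm_eq_abs] at h1
  refine le_trans h1 ?_
  have h2 : ((semicircleLaw l e) Set.univ).toReal ≤ 2 := by
    refine ENNReal.toReal_le_of_le_ofReal (by norm_num) ?_
    rw [show ENNReal.ofReal (2:ℝ) = 2 by norm_num]
    exact semicircle_mass he
  calc M^n * ((semicircleLaw l e) Set.univ).toReal ≤ M^n * 2 := by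
        exact mul_le_mul_of_nonneg_left h2 (by positivity)
    _ = 2 * M^n := by ring

lemma sqrt4e {e : ℝ} (he : 0 ≤ e) : Real.sqrt (4*e) = 2*Real.sqrt e := by
  rw [show (4:ℝ)*e = 2^2*e by norm_num, Real.sqrt_mul (by positivity) e,
    Real.sqrt_sq (by norm_num)]

lemma semicircle_cauchy {l e x : ℝ} (he : 0 < e) (hx : x ≠ 0)
    (hA : |2*x*Real.sqrt e| < 1 - l*x) :
    ∫ s, (1 - x*s)⁻¹ ∂(semicircleLaw l e)
      = 2 / (1 - l*x + Real.sqrt ((1 - l*x)^2 - 4*x^2*e)) := by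
  have hse : (0:ℝ) < Real.sqrt e := Real.sqrt_pos.2 he
  have hss : Real.sqrt e * Real.sqrt e = e := Real.mul_self_sqrt he.le
  set A : ℝ := 1 - l*x with hAdef
  set B : ℝ := 2*x*Real.sqrt e with hBdef
  have hB : B ≠ 0 := by
    rw [hBdef]; exact mul_ne_zero (mul_ne_zero two_ne_zero hx) (ne_of_gt hse)
  have hB2 : B^2 = 4*x^2*e := by rw [hBdef, mul_pow, mul_pow, Real.sq_sqrt he.le]; ring
  have hApos : 0 < A := lt_of_le_of_lt (abs_nonneg B) hA
  have hD : 0 < A^2 - B^2 := by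
    have h1 := abs_lt.1 hA
    nlinarith [h1.1, h1.2]
  have key := key_integral hB hA
  -- unfold to weighted Lebesgue integral
  rw [semicircle_integral l e he.le]
  -- restrict to the support interval
  have hvan : ∀ s ∉ Set.Icc (l - 2*Real.sqrt e) (l + 2*Real.sqrt e),
      rho l e s * (1 - x*s)⁻¹ = 0 := fun s hs => by rw [rho_zero he.le hs, zero_mul]
  rw [← setIntegral_eq_integral_of_forall_compl_eq_zero hvan]
  rw [MeasureTheory.integral_Icc_eq_integral_Ioc,
    ← intervalIntegral.integral_of_le (by linarith : l - 2*Real.sqrt e ≤ l + 2*Real.sqrt e)]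
  -- substitution s = 2√e u + l
  have hsub := intervalIntegral.smul_integral_comp_mul_add
    (a := (-1:ℝ)) (b := 1) (fun s => rho l e s * (1 - x*s)⁻¹) (2*Real.sqrt e) l
  rw [show 2*Real.sqrt e*(-1)+l = l - 2*Real.sqrt e by ring,
    show 2*Real.sqrt e*1+l = l + 2*Real.sqrt e by ring] at hsub
  rw [← hsub]
  -- compute the transformed integrand on [-1,1]
  have hcongr : ∫ u in (-1:ℝ)..1,
      (fun s => rho l e s * (1 - x*s)⁻¹) (2*Real.sqrt e*u + l)
      = ∫ u in (-1:ℝ)..1, ((2*Real.pi*e)⁻¹*(2*Real.sqrt e)) * (Real.sqrt (1-u^2)/(A - B*u)) := by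
    refine intervalIntegral.integral_congr (fun u hu => ?_)
    rw [Set.uIcc_of_le (by norm_num : (-1:ℝ) ≤ 1)] at hu
    have hu2 : 0 ≤ 1 - u^2 := by nlinarith [hu.1, hu.2]
    simp only [rho]
    have e1 : 4*e - (2*Real.sqrt e*u + l - l)^2 = 4*e*(1-u^2) := by
      have : (2*Real.sqrt e*u)^2 = 4*e*u^2 := by nlinarith [hss]
      ring_nf
      nlinarith [hss]
    rw [e1, show (0:ℝ) = 4*e*0 by ring, ← mul_max_of_nonneg _ _ (by linarith : (0:ℝ) ≤ 4*e)]
    rw [Real.sqrt_mul (by linarith) _, sqrt4e he.le, max_eq_left hu2]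
    have e2 : 1 - x*(2*Real.sqrt e*u + l) = A - B*u := by rw [hAdef, hBdef]; ring
    rw [e2, div_eq_mul_inv]
    ring
  rw [hcongr, intervalIntegral.integral_const_mul, key]
  -- final algebra
  set c : ℝ := Real.sqrt (A^2 - 4*x^2*e) with hcdef
  have hc2 : c^2 = A^2 - 4*x^2*e := Real.sq_sqrt (by rw [← hB2]; linarith)
  have hc0 : 0 ≤ c := Real.sqrt_nonneg _
  have hAC : 0 < A + c := by linarith
  rw [smul_eq_mul, hB2]
  have hπ : Real.pi ≠ 0 := ne_of_gt Real.pi_pos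
  rw [← hcdef]
  field_simp
  linear_combination (-(Real.sqrt e^2)) * hc2 + (4*x^2*e) * hss

lemma semicircle_series {l e x M : ℝ} (he : 0 < e) (hx : x ≠ 0)
    (hM : |l| + 2*Real.sqrt e ≤ M) (hxM : |x| * M ≤ 1/2)
    (hA : |2*x*Real.sqrt e| < 1 - l*x) :
    ∑' n : ℕ, x^n * ∫ s, s^n ∂(semicircleLaw l e)
      = 2 / (1 - l*x + Real.sqrt ((1 - l*x)^2 - 4*x^2*e)) := by
  haveI := semicircle_finite (l := l) he
  have hM0 : (0:ℝ) ≤ M := le_trans (by positivity) hM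
  have hae : ∀ᵐ s ∂(semicircleLaw l e), |x*s| ≤ 1/2 := by
    refine (semicircle_ae_mem he.le).mono (fun s hs => ?_)
    have habs : |s| ≤ M := by
      rw [abs_le]
      constructor
      · have := hs.1; have := neg_abs_le l; nlinarith [Real.sqrt_nonneg e]
      · have := hs.2; have := le_abs_self l; nlinarith [Real.sqrt_nonneg e]
    rw [abs_mul]
    exact le_trans (mul_le_mul_of_nonneg_left habs (abs_nonneg x)) hxM
  have h1 : ∀ n : ℕ, x^n * ∫ s, s^n ∂(semicircleLaw l e)
      = ∫ s, (x*s)^n ∂(semicircleLaw l e) := by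
    intro n
    rw [← MeasureTheory.integral_const_mul]
    exact integral_congr_ae (Filter.Eventually.of_forall fun s => (mul_pow x s n).symm)
  have hmeas : ∀ n : ℕ, AEStronglyMeasurable (fun s : ℝ => (x*s)^n) (semicircleLaw l e) :=
    fun n => ((continuous_const.mul continuous_id).pow n).aestronglyMeasurable
  have hfin : ∑' n : ℕ, ∫⁻ s, ‖(x*s)^n‖₊ ∂(semicircleLaw l e) ≠ ⊤ := by
    have hb : ∀ n : ℕ, ∫⁻ s, ‖(x*s)^n‖₊ ∂(semicircleLaw l e) ≤ 2⁻¹^n * 2 := by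
      intro n
      have hp : ∫⁻ s, ‖(x*s)^n‖₊ ∂(semicircleLaw l e)
          ≤ ∫⁻ _, (2⁻¹:ℝ≥0∞)^n ∂(semicircleLaw l e) := by
        refine lintegral_mono_ae (hae.mono fun s hs => ?_)
        calc (‖(x*s)^n‖₊ : ℝ≥0∞) = ENNReal.ofReal (|x*s|^n) := by
              rw [← enorm_eq_nnnorm, Real.enorm_eq_ofReal_abs, abs_pow]
          _ ≤ ENNReal.ofReal ((2⁻¹:ℝ)^n) := by
              refine ENNReal.ofReal_le_ofReal (pow_le_pow_left₀ (abs_nonneg _) ?_ n)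
              rw [show ((2:ℝ))⁻¹ = 1/2 by norm_num]; exact hs
          _ = (ENNReal.ofReal (2⁻¹:ℝ))^n := ENNReal.ofReal_pow (by norm_num) n
          _ = (2⁻¹:ℝ≥0∞)^n := by
              congr 1
              rw [ENNReal.ofReal_inv_of_pos (by norm_num)]
              norm_num
      refine le_trans hp ?_
      rw [lintegral_const]
      exact mul_le_mul_right (semicircle_mass he) _
    refine ne_top_of_le_ne_top (b := 4) (by norm_num) ?_
    calc ∑' n : ℕ, ∫⁻ s, ‖(x*s)^n‖₊ ∂(semicircleLaw l e) ≤ ∑' n : ℕ, (2⁻¹:ℝ≥0∞)^n * 2 :=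
          ENNReal.tsum_le_tsum hb
      _ = (∑' n : ℕ, (2⁻¹:ℝ≥0∞)^n) * 2 := ENNReal.tsum_mul_right
      _ = 4 := by rw [ENNReal.tsum_geometric, ENNReal.one_sub_inv_two, inv_inv]; norm_num
  calc ∑' n : ℕ, x^n * ∫ s, s^n ∂(semicircleLaw l e)
      = ∑' n : ℕ, ∫ s, (x*s)^n ∂(semicircleLaw l e) := by
        exact tsum_congr h1
    _ = ∫ s, ∑' n : ℕ, (x*s)^n ∂(semicircleLaw l e) := (MeasureTheory.integral_tsum hmeas hfin).symm
    _ = ∫ s, (1 - x*s)⁻¹ ∂(semicircleLaw l e) := by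
        refine integral_congr_ae (hae.mono fun s hs => ?_)
        exact tsum_geometric_of_norm_lt_one (by rw [Real.norm_eq_abs]; linarith)
    _ = 2 / (1 - l*x + Real.sqrt ((1 - l*x)^2 - 4*x^2*e)) := semicircle_cauchy he hx hA


lemma meixner_pos {l e x M : ℝ} (he : 0 ≤ e) (hM : |l| + 2*Real.sqrt e ≤ M)
    (hxM : |x| * M ≤ 1/4) : 0 < (1 - l*x)^2 - 4*x^2*e := by
  have h1 : |l| * |x| ≤ 1/4 := by
    calc |l| * |x| = |x| * |l| := mul_comm _ _
      _ ≤ |x| * M := mul_le_mul_of_nonneg_left (by nlinarith [Real.sqrt_nonneg e]) (abs_nonneg x)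
      _ ≤ 1/4 := hxM
  have h2 : 2 * |x| * Real.sqrt e ≤ 1/4 := by
    calc 2 * |x| * Real.sqrt e = |x| * (2*Real.sqrt e) := by ring
      _ ≤ |x| * M := mul_le_mul_of_nonneg_left (by nlinarith [abs_nonneg l]) (abs_nonneg x)
      _ ≤ 1/4 := hxM
  have h3 : |l*x| ≤ 1/4 := by rw [abs_mul]; exact h1
  have h4 : 4*x^2*e = (2 * |x| * Real.sqrt e)^2 := by
    rw [mul_pow, mul_pow, Real.sq_sqrt he, sq_abs]; ring
  have h5 := abs_le.1 h3
  nlinarith [h5.1, h5.2, sq_nonneg (2 * |x| * Real.sqrt e), mul_nonneg (mul_nonneg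
    (by norm_num : (0:ℝ) ≤ 2) (abs_nonneg x)) (Real.sqrt_nonneg e)]

lemma meixner_hA {l e x M : ℝ} (he : 0 ≤ e) (hM : |l| + 2*Real.sqrt e ≤ M)
    (hxM : |x| * M ≤ 1/4) : |2*x*Real.sqrt e| < 1 - l*x := by
  have h3 : |l*x| ≤ 1/4 := by
    rw [abs_mul]
    calc |l| * |x| = |x| * |l| := mul_comm _ _
      _ ≤ |x| * M := mul_le_mul_of_nonneg_left (by nlinarith [Real.sqrt_nonneg e]) (abs_nonneg x)
      _ ≤ 1/4 := hxM
  have h5 := abs_le.1 h3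
  have h2 : |2*x*Real.sqrt e| ≤ 1/4 := by
    rw [abs_mul, abs_mul, abs_two, abs_of_nonneg (Real.sqrt_nonneg e)]
    calc 2 * |x| * Real.sqrt e = |x| * (2*Real.sqrt e) := by ring
      _ ≤ |x| * M := mul_le_mul_of_nonneg_left (by nlinarith [abs_nonneg l]) (abs_nonneg x)
      _ ≤ 1/4 := hxM
  linarith [h5.2]

lemma meixner_pointwise {l e x M : ℝ} (he : 0 ≤ e) (hM : |l| + 2*Real.sqrt e ≤ M)
    (hxM : |x| * M ≤ 1/4) :
    ∑' n : ℕ, x^(n+2) * ∫ s, s^n ∂(if e = 0 then Measure.dirac l else semicircleLaw l e)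
      = 2 * x^2 * (1 - l*x + Real.sqrt ((1 - l*x)^2 - 4*x^2*e))⁻¹ := by
  rcases eq_or_ne x 0 with rfl | hx
  · simp
  have h3 : |l*x| ≤ 1/4 := by
    rw [abs_mul]
    calc |l| * |x| = |x| * |l| := mul_comm _ _
      _ ≤ |x| * M := mul_le_mul_of_nonneg_left (by nlinarith [Real.sqrt_nonneg e]) (abs_nonneg x)
      _ ≤ 1/4 := hxM
  have h5 := abs_le.1 h3
  have hA1 : (0:ℝ) < 1 - l*x := by linarith [h5.2]
  have hfac : ∀ (m : ℕ → ℝ), ∑' n : ℕ, x^(n+2) * m n = x^2 * ∑' n : ℕ, x^n * m n := by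
    intro m
    rw [← tsum_mul_left]
    exact tsum_congr fun n => by rw [pow_add]; ring
  by_cases h0 : e = 0
  · subst h0
    rw [if_pos rfl, hfac]
    have hterm : ∀ n : ℕ, x^n * ∫ s, s^n ∂(Measure.dirac l) = (x*l)^n := by
      intro n
      rw [integral_dirac, mul_pow]
    rw [tsum_congr hterm, tsum_geometric_of_norm_lt_one
      (by rw [Real.norm_eq_abs, mul_comm]; linarith [abs_le.1 h3])]
    rw [show (4:ℝ)*x^2*0 = 0 by ring, sub_zero, Real.sqrt_sq hA1.le]
    rw [show x*l = l*x from mul_comm x l]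
    field_simp
    ring
  · rw [if_neg h0, hfac]
    have he' : 0 < e := lt_of_le_of_ne he (Ne.symm h0)
    rw [semicircle_series he' hx hM (by linarith) (meixner_hA he hM hxM)]
    field_simp

lemma meixner_moment_meas {T : Type*} [MeasurableSpace T] [TopologicalSpace T] [BorelSpace T]
    (lam eta : T → ℝ) (hlam : Continuous lam) (heta : Continuous eta)
    (heta0 : ∀ t, 0 ≤ eta t) (n : ℕ) :
    Measurable fun t => ∫ s, s^n ∂(meixnerDist lam eta t) := by
  have keyf : (fun t => ∫ s, s^n ∂(meixnerDist lam eta t))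
      = fun t => if eta t = 0 then (lam t)^n else ∫ s, rho (lam t) (eta t) s * s^n := by
    funext t
    rw [meixnerDist]
    split_ifs with h
    · exact integral_dirac _ _
    · exact semicircle_integral _ _ (heta0 t) _
  rw [keyf]
  refine Measurable.ite ?_ ?_ ?_
  · exact heta.measurable (measurableSet_singleton 0)
  · exact (hlam.pow n).measurable
  · have hsm : StronglyMeasurable fun p : T × ℝ => rho (lam p.1) (eta p.1) p.2 * p.2^n := by
      apply Measurable.stronglyMeasurable
      refine Measurable.mul ?_ ((continuous_snd.pow n).measurable)
      unfold rho
      refine Measurable.mul ?_ ?_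
      · exact ((continuous_const.mul (heta.comp continuous_fst)).measurable).inv
      · exact (Continuous.measurable
          ((((continuous_const.mul (heta.comp continuous_fst)).sub
            ((continuous_snd.sub (hlam.comp continuous_fst)).pow 2)).max continuous_const).sqrt))
    exact (hsm.integral_prod_right').measurable


/-- **Free cumulant transform of a free Meixner process.** For every relatively compact
Borel `Δ ⊆ T` there is `r > 0` such that for every Borel `f : T → ℝ` vanishing outside
`Δ` with `|f| < r`, the series `∑_{n≥2} ∫_T f(t)ⁿ (∫_ℝ s^{n−2} dμ_t(s)) dσ(t)` converges
absolutely and equals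
`∫_T 2 f(t)² (1 − λ(t)f(t) + √((1 − λ(t)f(t))² − 4 f(t)² η(t)))⁻¹ dσ(t)`,
the expression under the (real) square root being positive on `Δ`. -/
theorem stmt14
    {T : Type*} [TopologicalSpace T] [LocallyCompactSpace T]
    [SecondCountableTopology T] [T2Space T]
    [MeasurableSpace T] [BorelSpace T]
    (σ : Measure T) [σ.Regular]
    (lam eta : T → ℝ) (hlam : Continuous lam) (heta : Continuous eta)
    (heta0 : ∀ t, 0 ≤ eta t) :
    ∀ Δ : Set T, MeasurableSet Δ → IsCompact (closure Δ) →
      ∃ r > (0 : ℝ), ∀ f : T → ℝ, Measurable f → (∀ t ∉ Δ, f t = 0) →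
        (∀ t, |f t| < r) →
        (∀ t ∈ Δ, 0 < (1 - lam t * f t) ^ 2 - 4 * f t ^ 2 * eta t) ∧
        Summable (fun n : ℕ =>
          |∫ t, f t ^ (n + 2) * ∫ s, s ^ n ∂(meixnerDist lam eta t) ∂σ|) ∧
        ∑' n : ℕ, ∫ t, f t ^ (n + 2) * ∫ s, s ^ n ∂(meixnerDist lam eta t) ∂σ =
          ∫ t, 2 * f t ^ 2 *
            (1 - lam t * f t +
              Real.sqrt ((1 - lam t * f t) ^ 2 - 4 * f t ^ 2 * eta t))⁻¹ ∂σ := by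

  intro Δ hΔm hΔc
  obtain ⟨C, hC⟩ := hΔc.exists_bound_of_continuousOn
    ((hlam.abs.add (continuous_const.mul (Real.continuous_sqrt.comp heta))).continuousOn)
  set M : ℝ := max C 1 with hMdef
  have hM1 : (1:ℝ) ≤ M := le_max_right C 1
  have hM0 : (0:ℝ) < M := lt_of_lt_of_le one_pos hM1
  refine ⟨(4*M)⁻¹, by positivity, ?_⟩
  intro f hf hfΔ hfr
  set r : ℝ := (4*M)⁻¹ with hrdef
  have hr0 : (0:ℝ) < r := by positivity
  have hφ : ∀ t ∈ Δ, |lam t| + 2*Real.sqrt (eta t) ≤ M := by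
    intro t ht
    have h1 := hC t (subset_closure ht)
    rw [Real.norm_eq_abs] at h1
    calc |lam t| + 2*Real.sqrt (eta t) ≤ |(|lam t| + 2*Real.sqrt (eta t))| := le_abs_self _
      _ ≤ C := h1
      _ ≤ M := le_max_left C 1
  have hxM : ∀ t ∈ Δ, |f t| * M ≤ 1/4 := by
    intro t ht
    have h1 : |f t| * M ≤ r * M := mul_le_mul_of_nonneg_right (hfr t).le hM0.le
    have h2 : r * M = 1/4 := by rw [hrdef]; field_simp
    linarith
  have hpos : ∀ t ∈ Δ, 0 < (1 - lam t * f t)^2 - 4 * f t^2 * eta t :=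
    fun t ht => meixner_pos (heta0 t) (hφ t ht) (hxM t ht)
  have hpt : ∀ t, ∑' n : ℕ, f t^(n+2) * ∫ s, s^n ∂(meixnerDist lam eta t)
      = 2 * f t^2 * (1 - lam t * f t
        + Real.sqrt ((1 - lam t * f t)^2 - 4 * f t^2 * eta t))⁻¹ := by
    intro t
    by_cases ht : t ∈ Δ
    · have h := meixner_pointwise (l := lam t) (e := eta t) (x := f t) (M := M)
        (heta0 t) (hφ t ht) (hxM t ht)
      simp only [meixnerDist]
      exact h
    · rw [hfΔ t ht]; simp
  have hmom : ∀ (n : ℕ), ∀ t ∈ Δ, |∫ s, s^n ∂(meixnerDist lam eta t)| ≤ 2*M^n := by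
    intro n t ht
    simp only [meixnerDist]
    split_ifs with h
    · rw [integral_dirac]
      have hl : |lam t| ≤ M := by nlinarith [Real.sqrt_nonneg (eta t), hφ t ht]
      calc |(lam t)^n| = |lam t|^n := abs_pow _ _
        _ ≤ M^n := pow_le_pow_left₀ (abs_nonneg _) hl n
        _ ≤ 2*M^n := by nlinarith [pow_nonneg hM0.le n]
    · exact semicircle_moment_bound (lt_of_le_of_ne (heta0 t) (Ne.symm h)) (hφ t ht) n
  have hσΔ : σ Δ < ⊤ := lt_of_le_of_lt (measure_mono subset_closure) hΔc.measure_lt_top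
  have hFb : ∀ (n : ℕ) (t : T), ‖f t^(n+2) * ∫ s, s^n ∂(meixnerDist lam eta t)‖
      ≤ Δ.indicator (fun _ => 2*r^(n+2)*M^n) t := by
    intro n t
    by_cases ht : t ∈ Δ
    · rw [Set.indicator_of_mem ht, Real.norm_eq_abs, abs_mul, abs_pow]
      have h3 : |f t|^(n+2) ≤ r^(n+2) := pow_le_pow_left₀ (abs_nonneg _) (hfr t).le _
      calc |f t|^(n+2) * |∫ s, s^n ∂(meixnerDist lam eta t)|
          ≤ r^(n+2) * (2*M^n) := mul_le_mul h3 (hmom n t ht) (abs_nonneg _) (by positivity)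
        _ = 2*r^(n+2)*M^n := by ring
    · rw [Set.indicator_of_notMem ht, hfΔ t ht]
      simp
  have hLb : ∀ n : ℕ, ∫⁻ t, ‖f t^(n+2) * ∫ s, s^n ∂(meixnerDist lam eta t)‖₊ ∂σ
      ≤ ENNReal.ofReal (2*r^(n+2)*M^n) * σ Δ := by
    intro n
    have hptw : ∀ t, (‖f t^(n+2) * ∫ s, s^n ∂(meixnerDist lam eta t)‖₊ : ℝ≥0∞)
        ≤ Δ.indicator (fun _ => ENNReal.ofReal (2*r^(n+2)*M^n)) t := by
      intro t
      by_cases ht : t ∈ Δ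
      · rw [Set.indicator_of_mem ht, ← enorm_eq_nnnorm, Real.enorm_eq_ofReal_abs]
        refine ENNReal.ofReal_le_ofReal ?_
        have h := hFb n t
        rw [Set.indicator_of_mem ht, Real.norm_eq_abs] at h
        exact h
      · rw [Set.indicator_of_notMem ht, hfΔ t ht]
        simp
    calc ∫⁻ t, ‖f t^(n+2) * ∫ s, s^n ∂(meixnerDist lam eta t)‖₊ ∂σ
        ≤ ∫⁻ t, Δ.indicator (fun _ => ENNReal.ofReal (2*r^(n+2)*M^n)) t ∂σ :=
          lintegral_mono hptw
      _ = ENNReal.ofReal (2*r^(n+2)*M^n) * σ Δ := by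
          rw [lintegral_indicator hΔm, setLIntegral_const]
  have hc_sum : Summable (fun n : ℕ => 2*r^(n+2)*M^n) := by
    have hrM : r * M = 1/4 := by rw [hrdef]; field_simp
    have hgeo : Summable (fun n : ℕ => (2*r^2) * (r*M)^n) :=
      (summable_geometric_of_lt_one (by positivity) (by rw [hrM]; norm_num)).mul_left _
    exact hgeo.congr (fun n => by rw [mul_pow, pow_add]; ring)
  have htsum_fin : ∑' n : ℕ, ∫⁻ t, ‖f t^(n+2) * ∫ s, s^n ∂(meixnerDist lam eta t)‖₊ ∂σ ≠ ⊤ := by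
    refine ne_top_of_le_ne_top ?_ (ENNReal.tsum_le_tsum hLb)
    rw [ENNReal.tsum_mul_right]
    refine ENNReal.mul_ne_top ?_ hσΔ.ne
    rw [← ENNReal.ofReal_tsum_of_nonneg (fun n => by positivity) hc_sum]
    exact ENNReal.ofReal_ne_top
  have hFmeas : ∀ n : ℕ, AEStronglyMeasurable
      (fun t => f t^(n+2) * ∫ s, s^n ∂(meixnerDist lam eta t)) σ :=
    fun n => ((hf.pow_const (n+2)).mul
      (meixner_moment_meas lam eta hlam heta heta0 n)).aestronglyMeasurable
  refine ⟨hpos, ?_, ?_⟩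
  · refine Summable.of_nonneg_of_le (fun n => abs_nonneg _) (fun n => ?_)
      (hc_sum.mul_right (σ Δ).toReal)
    have h1 : ‖∫ t, f t^(n+2) * ∫ s, s^n ∂(meixnerDist lam eta t) ∂σ‖
        ≤ (∫⁻ t, ‖f t^(n+2) * ∫ s, s^n ∂(meixnerDist lam eta t)‖₊ ∂σ).toReal := by
      have h2 := MeasureTheory.norm_integral_le_lintegral_norm
        (μ := σ) (fun t => f t^(n+2) * ∫ s, s^n ∂(meixnerDist lam eta t))
      simp only [ofReal_norm_eq_enorm] at h2
      exact h2
    rw [Real.norm_eq_abs] at h1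
    refine le_trans h1 ?_
    have h3 : (∫⁻ t, ‖f t^(n+2) * ∫ s, s^n ∂(meixnerDist lam eta t)‖₊ ∂σ).toReal
        ≤ (ENNReal.ofReal (2*r^(n+2)*M^n) * σ Δ).toReal := by
      refine ENNReal.toReal_mono (ENNReal.mul_ne_top ENNReal.ofReal_ne_top hσΔ.ne) (hLb n)
    refine le_trans h3 ?_
    rw [ENNReal.toReal_mul, ENNReal.toReal_ofReal (by positivity)]
  · rw [← MeasureTheory.integral_tsum hFmeas htsum_fin]
    exact integral_congr_ae (Filter.Eventually.of_forall fun t => hpt t)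
end

section
/- Let μ be a Borel probability measure on ℝ with compact support, let λ ∈ ℝ and η > 0, and define real polynomials p_n by p_0 = 1, p_1 = X − λ, and p_{n+1} = (X − λ)·p_n − η·p_{n−1} for n ≥ 1. If ∫_ℝ p_n(s) p_m(s) dμ(s) = 0 for all m ≠ n, then μ equals the semicircle law with mean λ and variance η. -/
open MeasureTheory Polynomial

namespace Stmt15Aux

open Real Set intervalIntegral
open scoped NNReal ENNReal

/-- Integral of `cos (kθ)` over `[0, π]`. -/
lemma integral_cos_nat (k : ℕ) :
    (∫ θ in (0:ℝ)..π, Real.cos ((k : ℝ) * θ)) = if k = 0 then π else 0 := by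
  rcases Nat.eq_zero_or_pos k with hk | hk
  · simp [hk]
  · have hk' : (k : ℝ) ≠ 0 := Nat.cast_ne_zero.mpr hk.ne'
    rw [if_neg hk.ne']
    rw [intervalIntegral.integral_comp_mul_left (fun x => Real.cos x) hk']
    simp [integral_cos, Real.sin_nat_mul_pi]

/-- Orthogonality of sines on `[0, π]`. -/
lemma integral_sin_mul (n : ℕ) :
    (∫ θ in (0:ℝ)..π, Real.sin (((n : ℝ) + 1) * θ) * Real.sin θ)
      = if n = 0 then π / 2 else 0 := by
  have h1 : ∀ θ : ℝ, Real.sin (((n : ℝ) + 1) * θ) * Real.sin θ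
      = (Real.cos ((n : ℝ) * θ) - Real.cos (((n : ℝ) + 2) * θ)) / 2 := by
    intro θ
    have h := Real.cos_sub_cos ((n : ℝ) * θ) (((n : ℝ) + 2) * θ)
    have e1 : ((n : ℝ) * θ + ((n : ℝ) + 2) * θ) / 2 = ((n : ℝ) + 1) * θ := by ring
    have e2 : ((n : ℝ) * θ - ((n : ℝ) + 2) * θ) / 2 = -θ := by ring
    rw [e1, e2, Real.sin_neg] at h
    linear_combination -h / 2
  have i1 : IntervalIntegrable (fun θ : ℝ => Real.cos ((n : ℝ) * θ)) volume 0 π :=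
    (Real.continuous_cos.comp (continuous_const.mul continuous_id)).intervalIntegrable _ _
  have i2 : IntervalIntegrable (fun θ : ℝ => Real.cos (((n : ℝ) + 2) * θ)) volume 0 π :=
    (Real.continuous_cos.comp (continuous_const.mul continuous_id)).intervalIntegrable _ _
  simp_rw [h1]
  rw [intervalIntegral.integral_div, intervalIntegral.integral_sub i1 i2]
  have c1 : (∫ θ in (0:ℝ)..π, Real.cos ((n : ℝ) * θ)) = if n = 0 then π else 0 :=
    integral_cos_nat n
  have c2 : (∫ θ in (0:ℝ)..π, Real.cos (((n : ℝ) + 2) * θ)) = 0 := by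
    have h := integral_cos_nat (n + 2)
    rw [if_neg (by omega)] at h
    push_cast at h
    exact h
  rw [c1, c2]
  split_ifs <;> ring

/-- Continuous functions are integrable w.r.t. a finite measure vanishing outside a compact. -/
lemma integrable_of_compact {μ : Measure ℝ} [IsFiniteMeasure μ] {K : Set ℝ}
    (hK : IsCompact K) (hμK : μ Kᶜ = 0) {f : ℝ → ℝ} (hf : Continuous f) :
    Integrable f μ := by
  obtain ⟨C, hC⟩ := hK.exists_bound_of_continuousOn hf.continuousOn
  refine (integrable_const C).mono' hf.aestronglyMeasurable ?_
  filter_upwards [(mem_ae_iff.mpr hμK : K ∈ ae μ)] with x hx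
  exact hC x hx

/-- Degrees and monicity of the Jacobi polynomials. -/
lemma monic_deg (l e : ℝ) (p : ℕ → Polynomial ℝ) (h0 : p 0 = 1) (h1 : p 1 = X - C l)
    (hrec : ∀ n : ℕ, p (n + 2) = (X - C l) * p (n + 1) - C e * p n) :
    ∀ n, (p n).Monic ∧ (p n).natDegree = n := by
  intro n
  induction n using Nat.twoStepInduction with
  | zero => simp [h0, monic_one]
  | one => simp [h1, monic_X_sub_C, natDegree_X_sub_C]
  | more n ih1 ih2 =>
    have hm : ((X - C l) * p (n + 1)).Monic := (monic_X_sub_C l).mul ih2.1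
    have hdg : ((X - C l) * p (n + 1)).natDegree = n + 2 := by
      rw [natDegree_mul (X_sub_C_ne_zero l) ih2.1.ne_zero, natDegree_X_sub_C, ih2.2]
      omega
    have hnd : (C e * p n).natDegree < ((X - C l) * p (n + 1)).natDegree := by
      rw [hdg]
      calc (C e * p n).natDegree ≤ (C e).natDegree + (p n).natDegree := natDegree_mul_le
        _ = n := by rw [natDegree_C, ih1.2, zero_add]
        _ < n + 2 := by omega
    have hlt : (C e * p n).degree < ((X - C l) * p (n + 1)).degree :=
      degree_lt_degree hnd
    constructor
    · rw [hrec n]; exact hm.sub_of_left hlt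
    · rw [hrec n, natDegree_sub_eq_left_of_natDegree_lt hnd, hdg]

/-- The Jacobi polynomials span all polynomials. -/
lemma span_top (p : ℕ → Polynomial ℝ) (hdeg : ∀ n, (p n).Monic ∧ (p n).natDegree = n) :
    ∀ q : Polynomial ℝ, q ∈ Submodule.span ℝ (Set.range p) := by
  have key : ∀ N : ℕ, ∀ q : Polynomial ℝ, q.natDegree ≤ N →
      q ∈ Submodule.span ℝ (Set.range p) := by
    intro N
    induction N with
    | zero =>
      intro q hq
      have hp0 : p 0 = 1 := (hdeg 0).1.natDegree_eq_zero.mp (hdeg 0).2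
      rw [eq_C_of_natDegree_le_zero hq]
      have : C (q.coeff 0) = q.coeff 0 • p 0 := by
        rw [hp0, smul_eq_C_mul, mul_one]
      rw [this]
      exact Submodule.smul_mem _ _ (Submodule.subset_span ⟨0, rfl⟩)
    | succ N ih =>
      intro q hq
      set r : Polynomial ℝ := q - C (q.coeff (N + 1)) * p (N + 1) with hr
      have hrd : r.natDegree ≤ N := by
        rw [natDegree_le_iff_coeff_eq_zero]
        intro m hm
        rcases eq_or_lt_of_le (Nat.succ_le_of_lt hm) with h | h
        · subst h
          have hp1 : (p (N + 1)).coeff (N + 1) = 1 := by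
            have hmo := (hdeg (N + 1)).1
            rw [Polynomial.Monic, Polynomial.leadingCoeff, (hdeg (N + 1)).2] at hmo
            exact hmo
          simp [hr, hp1]
        · have hqm : q.coeff m = 0 := coeff_eq_zero_of_natDegree_lt (lt_of_le_of_lt hq h)
          have hpm : (p (N + 1)).coeff m = 0 :=
            coeff_eq_zero_of_natDegree_lt (by rw [(hdeg (N + 1)).2]; exact h)
          simp [hr, hqm, hpm]
      have hq' : q = r + q.coeff (N + 1) • p (N + 1) := by
        rw [hr, smul_eq_C_mul]; ring
      rw [hq']
      exact Submodule.add_mem _ (ih r hrd)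
        (Submodule.smul_mem _ _ (Submodule.subset_span ⟨N + 1, rfl⟩))
  exact fun q => key q.natDegree q le_rfl

/-- Evaluation of the Jacobi polynomials at `l + 2a cos θ` in terms of sines. -/
lemma eval_trig (l a : ℝ) (p : ℕ → Polynomial ℝ) (h0 : p 0 = 1) (h1 : p 1 = X - C l)
    (hrec : ∀ n : ℕ, p (n + 2) = (X - C l) * p (n + 1) - C (a ^ 2) * p n) :
    ∀ (n : ℕ) (θ : ℝ), Real.sin θ * (p n).eval (l + 2 * a * Real.cos θ)
      = a ^ n * Real.sin (((n : ℝ) + 1) * θ) := by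
  intro n
  induction n using Nat.twoStepInduction with
  | zero => intro θ; simp [h0]
  | one =>
    intro θ
    have h2 : Real.sin (2 * θ) = 2 * Real.sin θ * Real.cos θ := Real.sin_two_mul θ
    simp only [h1, eval_sub, eval_X, eval_C, Nat.cast_one, pow_one]
    rw [show ((1 : ℝ) + 1) * θ = 2 * θ by ring, h2]
    ring
  | more n ih1 ih2 =>
    intro θ
    have trig : Real.sin (((n : ℝ) + 3) * θ)
        = 2 * Real.cos θ * Real.sin (((n : ℝ) + 1 + 1) * θ) - Real.sin (((n : ℝ) + 1) * θ) := by
      have hA := Real.sin_add (((n : ℝ) + 1 + 1) * θ) θ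
      have hB := Real.sin_sub (((n : ℝ) + 1 + 1) * θ) θ
      have e1 : ((n : ℝ) + 1 + 1) * θ + θ = ((n : ℝ) + 3) * θ := by ring
      have e2 : ((n : ℝ) + 1 + 1) * θ - θ = ((n : ℝ) + 1) * θ := by ring
      rw [e1] at hA; rw [e2] at hB
      linarith
    have ihA := ih1 θ
    have ihB := ih2 θ
    push_cast at ihB
    rw [hrec n]
    simp only [eval_sub, eval_mul, eval_X, eval_C]
    push_cast
    rw [show ((n : ℝ) + 2 + 1) * θ = ((n : ℝ) + 3) * θ by ring, trig]
    linear_combination (2 * a * Real.cos θ) * ihB - a ^ 2 * ihA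

/-- Reduction of integrals against the semicircle law to trigonometric integrals. -/
lemma semicircle_integral (l a : ℝ) (ha : 0 < a) (g : ℝ → ℝ) (hg : Continuous g) :
    (∫ s, g s ∂(semicircleLaw l (a ^ 2)))
      = (2 / π) * ∫ θ in (0:ℝ)..π, Real.sin θ * (Real.sin θ * g (l + 2 * a * Real.cos θ)) := by
  set d : ℝ → ℝ := fun s => (2 * π * a ^ 2)⁻¹ * Real.sqrt (max (4 * a ^ 2 - (s - l) ^ 2) 0)
    with hd
  have hd_cont : Continuous d := by
    apply continuous_const.mul
    exact Real.continuous_sqrt.comp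
      ((continuous_const.sub (((continuous_id.sub continuous_const)).pow 2)).max continuous_const)
  have hd_nonneg : ∀ s, 0 ≤ d s := fun s => by
    apply mul_nonneg (inv_nonneg.mpr (by positivity)) (Real.sqrt_nonneg _)
  -- Step 1: unfold withDensity
  have step1 : (∫ s, g s ∂(semicircleLaw l (a ^ 2))) = ∫ s, d s * g s := by
    have hmeas : Measurable fun s => Real.toNNReal (d s) :=
      measurable_real_toNNReal.comp hd_cont.measurable
    have hsc : semicircleLaw l (a ^ 2)
        = volume.withDensity fun s => ((Real.toNNReal (d s) : ℝ≥0) : ℝ≥0∞) := rfl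
    rw [hsc, integral_withDensity_eq_integral_smul hmeas g]
    congr 1
    ext s
    rw [NNReal.smul_def, Real.coe_toNNReal _ (hd_nonneg s), smul_eq_mul]
  -- Step 2: restrict to the interval
  have hsub : Function.support (fun s => d s * g s) ⊆ Set.Icc (l - 2 * a) (l + 2 * a) := by
    intro s hs
    by_contra hsI
    apply hs
    have h4 : 4 * a ^ 2 - (s - l) ^ 2 ≤ 0 := by
      simp only [Set.mem_Icc, not_and_or, not_le] at hsI
      rcases hsI with h | h <;> nlinarith
    simp only [hd, max_eq_right h4, Real.sqrt_zero, mul_zero, zero_mul]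
  have step2 : (∫ s, d s * g s) = ∫ s in (l - 2 * a)..(l + 2 * a), d s * g s := by
    rw [intervalIntegral.integral_of_le (by linarith : l - 2 * a ≤ l + 2 * a),
      ← integral_Icc_eq_integral_Ioc, ← MeasureTheory.integral_indicator measurableSet_Icc,
      Set.indicator_eq_self.mpr hsub]
  -- Step 3: substitution s = l + 2a cos θ
  have hderiv : ∀ θ ∈ Set.uIcc (0:ℝ) π,
      HasDerivAt (fun θ : ℝ => l + 2 * a * Real.cos θ) (-(2 * a * Real.sin θ)) θ := by
    intro θ _
    simpa [mul_comm] using ((Real.hasDerivAt_cos θ).const_mul (2 * a)).const_add l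
  have step3 : (∫ s in (l - 2 * a)..(l + 2 * a), d s * g s)
      = ∫ θ in (0:ℝ)..π, (2 * a * Real.sin θ) * (d (l + 2 * a * Real.cos θ)
          * g (l + 2 * a * Real.cos θ)) := by
    have hcont' : ContinuousOn (fun θ : ℝ => -(2 * a * Real.sin θ)) (Set.uIcc 0 π) :=
      (continuous_const.mul Real.continuous_sin).neg.continuousOn
    have hsub' := intervalIntegral.integral_comp_smul_deriv hderiv hcont'
      (hd_cont.mul hg)
    simp only [Real.cos_zero, Real.cos_pi, Function.comp] at hsub'
    rw [show l + 2 * a * (1:ℝ) = l + 2 * a by ring, show l + 2 * a * (-1:ℝ) = l - 2 * a by ring]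
      at hsub'
    have hflip : (∫ s in (l - 2 * a)..(l + 2 * a), d s * g s)
        = -∫ θ in (0:ℝ)..π, -(2 * a * Real.sin θ)
            • (d (l + 2 * a * Real.cos θ) * g (l + 2 * a * Real.cos θ)) := by
      simp only [Pi.mul_apply] at hsub'
      rw [hsub', intervalIntegral.integral_symm]
    rw [hflip, ← intervalIntegral.integral_neg]
    apply intervalIntegral.integral_congr
    intro θ _
    simp only [smul_eq_mul]
    ring
  -- Step 4: pointwise simplification on [0, π]
  have step4 : (∫ θ in (0:ℝ)..π, (2 * a * Real.sin θ) * (d (l + 2 * a * Real.cos θ)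
          * g (l + 2 * a * Real.cos θ)))
      = ∫ θ in (0:ℝ)..π, (2 / π) * (Real.sin θ * (Real.sin θ * g (l + 2 * a * Real.cos θ))) := by
    apply intervalIntegral.integral_congr
    intro θ hθ
    rw [Set.uIcc_of_le Real.pi_pos.le] at hθ
    have hsin : 0 ≤ Real.sin θ := Real.sin_nonneg_of_nonneg_of_le_pi hθ.1 hθ.2
    have hmax : max (4 * a ^ 2 - (l + 2 * a * Real.cos θ - l) ^ 2) 0
        = (2 * a * Real.sin θ) ^ 2 := by
      have hpyth : Real.sin θ ^ 2 + Real.cos θ ^ 2 = 1 := Real.sin_sq_add_cos_sq θ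
      rw [max_eq_left (by nlinarith)]
      nlinarith
    have hsqrt : Real.sqrt (max (4 * a ^ 2 - (l + 2 * a * Real.cos θ - l) ^ 2) 0)
        = 2 * a * Real.sin θ := by
      rw [hmax, Real.sqrt_sq (by positivity)]
    simp only [hd, hsqrt]
    have hπ : π ≠ 0 := Real.pi_ne_zero
    have ha' : a ≠ 0 := ha.ne'
    field_simp
  rw [step1, step2, step3, step4, intervalIntegral.integral_const_mul]

/-- The semicircle law vanishes outside `[l - 2a, l + 2a]`. -/
lemma semicircle_supp (l a : ℝ) (ha : 0 < a) :
    (semicircleLaw l (a ^ 2)) (Set.Icc (l - 2 * a) (l + 2 * a))ᶜ = 0 := by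
  rw [semicircleLaw, withDensity_apply _ measurableSet_Icc.compl]
  have hzero : ∀ s ∈ (Set.Icc (l - 2 * a) (l + 2 * a))ᶜ,
      ENNReal.ofReal ((2 * π * a ^ 2)⁻¹ * Real.sqrt (max (4 * a ^ 2 - (s - l) ^ 2) 0))
        = (fun _ : ℝ => (0 : ℝ≥0∞)) s := by
    intro s hs
    have h4 : 4 * a ^ 2 - (s - l) ^ 2 ≤ 0 := by
      simp only [Set.mem_compl_iff, Set.mem_Icc, not_and_or, not_le] at hs
      rcases hs with h | h <;> nlinarith
    simp only
    rw [max_eq_right h4, Real.sqrt_zero, mul_zero, ENNReal.ofReal_zero]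
  refine (setLIntegral_congr_fun measurableSet_Icc.compl
    hzero).trans ?_
  simp

/-- The semicircle law is a probability measure. -/
lemma semicircle_mass (l a : ℝ) (ha : 0 < a) : (semicircleLaw l (a ^ 2)) Set.univ = 1 := by
  have h := semicircle_integral l a ha (fun _ => 1) continuous_const
  rw [MeasureTheory.integral_const, smul_eq_mul, mul_one] at h
  have h2 : (∫ θ in (0:ℝ)..π, Real.sin θ * (Real.sin θ * (fun _ : ℝ => (1:ℝ)) (l + 2 * a * Real.cos θ)))
      = ∫ θ in (0:ℝ)..π, Real.sin ((((0:ℕ) : ℝ) + 1) * θ) * Real.sin θ := by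
    apply intervalIntegral.integral_congr
    intro θ _
    norm_num
  rw [h2, integral_sin_mul 0, if_pos rfl] at h
  have hπ : π ≠ 0 := Real.pi_ne_zero
  rw [show 2 / π * (π / 2) = 1 by field_simp] at h
  exact (ENNReal.toReal_eq_one_iff _).mp h

/-- Integrals of the Jacobi polynomials against the semicircle law. -/
lemma semicircle_ortho (l a : ℝ) (ha : 0 < a) (p : ℕ → Polynomial ℝ)
    (h0 : p 0 = 1) (h1 : p 1 = X - C l)
    (hrec : ∀ n : ℕ, p (n + 2) = (X - C l) * p (n + 1) - C (a ^ 2) * p n) (n : ℕ) :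
    (∫ s, (p n).eval s ∂(semicircleLaw l (a ^ 2))) = if n = 0 then 1 else 0 := by
  rw [semicircle_integral l a ha _ (p n).continuous]
  simp only [eval_trig l a p h0 h1 hrec n]
  have hcomm : (∫ θ in (0:ℝ)..π, Real.sin θ * (a ^ n * Real.sin (((n:ℝ) + 1) * θ)))
      = ∫ θ in (0:ℝ)..π, a ^ n * (Real.sin (((n:ℝ) + 1) * θ) * Real.sin θ) :=
    intervalIntegral.integral_congr fun θ _ => by ring
  rw [hcomm, intervalIntegral.integral_const_mul, integral_sin_mul n]
  have hπ : π ≠ 0 := Real.pi_ne_zero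
  split_ifs with hn
  · subst hn; field_simp
  · simp

end Stmt15Aux

open Stmt15Aux
open scoped NNReal ENNReal

/-- **Characterization of the semicircle law by its Jacobi parameters.** If `μ` is a
compactly supported Borel probability measure on `ℝ` for which the polynomials defined by
`p₀ = 1`, `p₁ = X − λ`, `p_{n+1} = (X − λ)p_n − η p_{n−1}` (`λ ∈ ℝ`, `η > 0`) are pairwise
orthogonal in `L²(ℝ, μ)`, then `μ` is the semicircle law with mean `λ` and variance `η`. -/
theorem stmt15 (μ : Measure ℝ) [IsProbabilityMeasure μ]
    (hsupp : ∃ K : Set ℝ, IsCompact K ∧ μ Kᶜ = 0)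
    (l e : ℝ) (he : 0 < e) (p : ℕ → Polynomial ℝ)
    (h0 : p 0 = 1) (h1 : p 1 = X - C l)
    (hrec : ∀ n : ℕ, p (n + 2) = (X - C l) * p (n + 1) - C e * p n)
    (horth : ∀ m n : ℕ, m ≠ n → ∫ s, (p n).eval s * (p m).eval s ∂μ = 0) :
    μ = semicircleLaw l e := by
  obtain ⟨K, hK, hμK⟩ := hsupp
  obtain ⟨a, ha, rfl⟩ : ∃ a : ℝ, 0 < a ∧ e = a ^ 2 :=
    ⟨Real.sqrt e, Real.sqrt_pos.mpr he, (Real.sq_sqrt he.le).symm⟩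
  set ν := semicircleLaw l (a ^ 2) with hν
  have hνmass : ν Set.univ = 1 := semicircle_mass l a ha
  have hνprob : IsProbabilityMeasure ν := ⟨hνmass⟩
  have hνsupp : ν (Set.Icc (l - 2 * a) (l + 2 * a))ᶜ = 0 := semicircle_supp l a ha
  have hdeg := monic_deg l (a ^ 2) p h0 h1 hrec
  -- integrability
  have hintμ : ∀ f : ℝ → ℝ, Continuous f → Integrable f μ :=
    fun f hf => integrable_of_compact hK hμK hf
  have hintν : ∀ f : ℝ → ℝ, Continuous f → Integrable f ν :=
    fun f hf => integrable_of_compact isCompact_Icc hνsupp hf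
  -- moments agree on the p n
  have hpν : ∀ n, (∫ s, (p n).eval s ∂ν) = if n = 0 then 1 else 0 :=
    semicircle_ortho l a ha p h0 h1 hrec
  have hpμ : ∀ n, (∫ s, (p n).eval s ∂μ) = if n = 0 then 1 else 0 := by
    intro n
    cases n with
    | zero => simp [h0]
    | succ n =>
      have h := horth 0 (n + 1) (Nat.succ_ne_zero n).symm
      simp only [h0, eval_one, mul_one] at h
      rw [h, if_neg (Nat.succ_ne_zero n)]
  -- all polynomial moments agree
  have hpoly : ∀ q : Polynomial ℝ, (∫ s, q.eval s ∂μ) = ∫ s, q.eval s ∂ν := by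
    intro q
    have hq := span_top p hdeg q
    induction hq using Submodule.span_induction with
    | mem x hx =>
      obtain ⟨n, rfl⟩ := hx
      rw [hpμ n, hpν n]
    | zero => simp
    | add x y hx hy ihx ihy =>
      simp only [eval_add]
      rw [integral_add (hintμ _ x.continuous) (hintμ _ y.continuous),
        integral_add (hintν _ x.continuous) (hintν _ y.continuous), ihx, ihy]
    | smul r x hx ih =>
      simp only [eval_smul, smul_eq_mul]
      rw [integral_const_mul, integral_const_mul, ih]
  -- choose a common interval
  obtain ⟨R, hRsub⟩ := (hK.union isCompact_Icc).isBounded.subset_closedBall 0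
  rw [Real.closedBall_eq_Icc, zero_sub, zero_add] at hRsub
  have hμR : μ (Set.Icc (-R) R)ᶜ = 0 :=
    measure_mono_null (Set.compl_subset_compl.mpr
      (Set.subset_union_left.trans hRsub)) hμK
  have hνR : ν (Set.Icc (-R) R)ᶜ = 0 :=
    measure_mono_null (Set.compl_subset_compl.mpr
      (Set.subset_union_right.trans hRsub)) hνsupp
  -- continuous functions integrate equally
  have hcont : ∀ f : ℝ → ℝ, Continuous f → (∫ s, f s ∂μ) = ∫ s, f s ∂ν := by
    intro f hf
    have habs : ∀ ε : ℝ, 0 < ε → |(∫ s, f s ∂μ) - ∫ s, f s ∂ν| ≤ ε := by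
      intro ε hε
      obtain ⟨q, hq⟩ := exists_polynomial_near_of_continuousOn (-R) R f
        hf.continuousOn (ε / 2) (by positivity)
      have key : ∀ (m : Measure ℝ), IsProbabilityMeasure m → m (Set.Icc (-R) R)ᶜ = 0 →
          Integrable f m → Integrable (fun s => q.eval s) m →
          |(∫ s, f s ∂m) - ∫ s, q.eval s ∂m| ≤ ε / 2 := by
        intro m hm hmR hif hiq
        rw [← integral_sub hif hiq]
        calc |∫ s, (f s - q.eval s) ∂m| ≤ (ε / 2) * (m Set.univ).toReal := by
              rw [← Real.norm_eq_abs]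
              apply norm_integral_le_of_norm_le_const
              filter_upwards [(mem_ae_iff.mpr hmR : Set.Icc (-R) R ∈ ae m)] with x hx
              rw [Real.norm_eq_abs, abs_sub_comm]
              exact (hq x hx).le
          _ = ε / 2 := by rw [measure_univ]; simp
      have h1 := key μ ‹_› hμR (hintμ f hf) (hintμ _ q.continuous)
      have h2 := key ν hνprob hνR (hintν f hf) (hintν _ q.continuous)
      calc |(∫ s, f s ∂μ) - ∫ s, f s ∂ν|
          = |((∫ s, f s ∂μ) - ∫ s, q.eval s ∂μ)
              + ((∫ s, q.eval s ∂ν) - ∫ s, f s ∂ν)| := by rw [hpoly q]; ring_nf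
        _ ≤ |(∫ s, f s ∂μ) - ∫ s, q.eval s ∂μ|
              + |(∫ s, q.eval s ∂ν) - ∫ s, f s ∂ν| := abs_add_le _ _
        _ ≤ ε / 2 + ε / 2 := add_le_add h1 (by rw [abs_sub_comm]; exact h2)
        _ = ε := by ring
    have h0' : |(∫ s, f s ∂μ) - ∫ s, f s ∂ν| ≤ 0 := by
      refine le_of_forall_pos_le_add fun ε hε => ?_
      rw [zero_add]; exact habs ε hε
    have := abs_nonpos_iff.mp h0'
    linarith [sub_eq_zero.mp this]
  -- conclude via bounded continuous functions
  refine ext_of_forall_lintegral_eq_of_IsFiniteMeasure fun f => ?_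
  have hfc : Continuous fun x => ((f x : ℝ≥0) : ℝ) :=
    NNReal.continuous_coe.comp f.continuous
  rw [lintegral_coe_eq_integral _ (hintμ _ hfc), lintegral_coe_eq_integral _ (hintν _ hfc),
    hcont _ hfc]
end
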